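/- arXiv:1811.11032 — 5 statements merged into one kernel-verified Lean document; each statement's English description precedes it below -/
import Mathlib

section
/- Let σ be a locally finite positive Borel measure on ℝ^n, f ≥ 0 a bounded measurable function with compact support, k ∈ ℤ, and Ω_k = { x : M(fσ)(x) > 2^k }. Let D be a shifted dyadic grid, R_W ≥ 3, and Q ∈ D a cube with 3R_W Q ∩ Ω_k^c ≠ ∅. Then the maximum principle holds: M^D(1_{Q^c} f σ)(x) ≤ 2(3R_W)^n · 2^k for every x ∈ Q. Consequently, if m ∈ ℕ satisfies 2^{m−1} ≥ 2(3R_W)^n, then every x ∈ Q with M^D(fσ)(x) > 2^{k+m} satisfies M^D(1_Q f σ)(x) > 2^{k+m−1}. -/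
open MeasureTheory Set Filter
open scoped ENNReal NNReal

noncomputable section

/-- An axis-parallel half-open cube in `ℝⁿ`, given by its lower corner and (positive)
side length. -/
structure Cube (n : ℕ) where
  corner : Fin n → ℝ
  side : ℝ
  side_pos : 0 < side

namespace Cube

variable {n : ℕ}

/-- The underlying (half-open) set of the cube. -/
def toSet (Q : Cube n) : Set (Fin n → ℝ) :=
  {x | ∀ i, Q.corner i ≤ x i ∧ x i < Q.corner i + Q.side}

/-- The concentric dilate `ΓQ` of the cube `Q` (same center, side length `Γ·ℓ(Q)`),
as a set. -/
def dilate (Q : Cube n) (Γ : ℝ) : Set (Fin n → ℝ) :=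
  {x | ∀ i, Q.corner i - (Γ - 1) * Q.side / 2 ≤ x i ∧
       x i < Q.corner i + Q.side + (Γ - 1) * Q.side / 2}

/-- Membership in `𝒫ⁿ`: the side length is an integral power of `2`. -/
def memP (Q : Cube n) : Prop := ∃ ℓ : ℤ, Q.side = (2:ℝ) ^ ℓ

end Cube

/-- The translation applied at scale `2^ℓ` in the random dyadic grid determined by `β`:
`Σ_{j : 2^{-j} < 2^ℓ} 2^{-j} β_j`. -/
def gridShift {n : ℕ} (β : ℤ → Fin n → Bool) (ℓ : ℤ) (i : Fin n) : ℝ :=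
  ∑' j : ℤ, if (2:ℝ) ^ (-j) < (2:ℝ) ^ ℓ ∧ β j i = true then (2:ℝ) ^ (-j) else 0

/-- Membership in the shifted dyadic grid `𝒟^β`. -/
def memGrid {n : ℕ} (β : ℤ → Fin n → Bool) (Q : Cube n) : Prop :=
  ∃ (ℓ : ℤ) (k : Fin n → ℤ), Q.side = (2:ℝ) ^ ℓ ∧
    ∀ i, Q.corner i = (2:ℝ) ^ ℓ * (k i : ℝ) + gridShift β ℓ i

/-- The Hardy–Littlewood maximal function of a measure, over cubes in `𝒫ⁿ`. -/
def maximal {n : ℕ} (μ : Measure (Fin n → ℝ)) (x : Fin n → ℝ) : ℝ≥0∞ :=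
  ⨆ (Q : Cube n) (_ : Q.memP) (_ : x ∈ Q.toSet), μ Q.toSet / volume Q.toSet

/-- The dyadic maximal function relative to the grid `𝒟^β`. -/
def dyadicMaximal {n : ℕ} (β : ℤ → Fin n → Bool) (μ : Measure (Fin n → ℝ))
    (x : Fin n → ℝ) : ℝ≥0∞ :=
  ⨆ (Q : Cube n) (_ : memGrid β Q) (_ : x ∈ Q.toSet), μ Q.toSet / volume Q.toSet

/-- The two-weight Muckenhoupt constant `A₂(σ,ω)`. -/
def A2 {n : ℕ} (σ ω : Measure (Fin n → ℝ)) : ℝ≥0∞ :=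
  ⨆ (Q : Cube n) (_ : Q.memP), (σ Q.toSet / volume Q.toSet) * (ω Q.toSet / volume Q.toSet)

/-- The operator norm `𝔑_M(σ,ω)` of the maximal function from `L²(σ)` to `L²(ω)`:
the least `N` with `∫ M(fσ)² dω ≤ N² ∫ f² dσ` for all (nonnegative) `f`. -/
def opNorm {n : ℕ} (σ ω : Measure (Fin n → ℝ)) : ℝ≥0∞ :=
  sInf {N : ℝ≥0∞ | ∀ f : (Fin n → ℝ) → ℝ≥0∞, Measurable f →
    ∫⁻ x, (maximal (σ.withDensity f) x) ^ 2 ∂ω ≤ N ^ 2 * ∫⁻ x, (f x) ^ 2 ∂σ}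

section AuxLemmas

variable {n : ℕ}

lemma cube_toSet_pi (Q : Cube n) :
    Q.toSet = Set.pi Set.univ (fun i => Set.Ico (Q.corner i) (Q.corner i + Q.side)) := by
  ext x; simp [Cube.toSet, Set.mem_pi]

lemma cube_measurable (Q : Cube n) : MeasurableSet Q.toSet := by
  rw [cube_toSet_pi]
  exact MeasurableSet.univ_pi fun i => measurableSet_Ico

lemma cube_volume (Q : Cube n) : volume Q.toSet = ENNReal.ofReal (Q.side ^ n) := by
  rw [cube_toSet_pi, volume_pi_pi]
  have h : ∀ i : Fin n, volume (Set.Ico (Q.corner i) (Q.corner i + Q.side))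
      = ENNReal.ofReal Q.side := by
    intro i; rw [Real.volume_Ico]; congr 1; ring
  simp [h, Finset.prod_const, ENNReal.ofReal_pow Q.side_pos.le]

lemma corner_mem_toSet (Q : Cube n) : Q.corner ∈ Q.toSet :=
  fun i => ⟨le_rfl, by linarith [Q.side_pos]⟩

lemma toSet_subset_iff (Q Q' : Cube n) :
    Q.toSet ⊆ Q'.toSet ↔
      ∀ i, Q'.corner i ≤ Q.corner i ∧ Q.corner i + Q.side ≤ Q'.corner i + Q'.side := by
  constructor
  · intro h i
    have h1 := h (corner_mem_toSet Q) i
    refine ⟨h1.1, ?_⟩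
    by_contra hc
    push_neg at hc
    set m : ℝ := (Q'.corner i + Q'.side + (Q.corner i + Q.side)) / 2 with hm
    set v : ℝ := max (Q.corner i) m with hv
    have hy : Function.update Q.corner i v ∈ Q.toSet := by
      intro j
      rcases eq_or_ne j i with rfl | hj
      · rw [Function.update_self]
        refine ⟨le_max_left _ _, ?_⟩
        rw [hv, max_lt_iff]
        constructor
        · linarith [Q.side_pos]
        · rw [hm]; linarith
      · rw [Function.update_of_ne hj]
        exact (corner_mem_toSet Q) j
    have h2 := h hy i
    rw [Function.update_self] at h2
    have : m ≤ v := le_max_right _ _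
    have : Q'.corner i + Q'.side ≤ m := by rw [hm]; linarith
    linarith [h2.2]
  · intro h x hx i
    exact ⟨(h i).1.trans (hx i).1, lt_of_lt_of_le (hx i).2 (h i).2⟩

lemma summable_gridShiftTerm (β : ℤ → Fin n → Bool) (ℓ : ℤ) (i : Fin n) :
    Summable (fun j : ℤ =>
      if (2:ℝ) ^ (-j) < (2:ℝ) ^ ℓ ∧ β j i = true then (2:ℝ) ^ (-j) else 0) := by
  rw [summable_int_iff_summable_nat_and_neg]
  constructor
  · refine Summable.of_nonneg_of_le (fun m => by positivity) (fun m => ?_)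
      summable_geometric_two
    have he : (2:ℝ) ^ (-(m:ℤ)) = (1/2 : ℝ) ^ m := by
      rw [zpow_neg, zpow_natCast, one_div, inv_pow]
    split_ifs with h
    · exact le_of_eq he
    · positivity
  · apply summable_of_ne_finset_zero (s := Finset.range ℓ.toNat)
    intro m hm
    simp only [Finset.mem_range, not_lt] at hm
    have hml : ℓ ≤ (m:ℤ) := by omega
    have : ¬ ((2:ℝ) ^ (-(-(m:ℤ))) < (2:ℝ) ^ ℓ) := by
      rw [not_lt, neg_neg]
      exact zpow_le_zpow_right₀ one_le_two hml
    exact if_neg (fun hc => this hc.1)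

lemma gridShift_succ (β : ℤ → Fin n → Bool) (ℓ : ℤ) (i : Fin n) :
    gridShift β (ℓ+1) i
      = gridShift β ℓ i + (if β (-ℓ) i = true then (2:ℝ) ^ ℓ else 0) := by
  unfold gridShift
  have hpt : ∀ j : ℤ,
      (if (2:ℝ) ^ (-j) < (2:ℝ) ^ (ℓ+1) ∧ β j i = true then (2:ℝ) ^ (-j) else 0)
      = (if (2:ℝ) ^ (-j) < (2:ℝ) ^ ℓ ∧ β j i = true then (2:ℝ) ^ (-j) else 0)
        + (if j = -ℓ then (if β (-ℓ) i = true then (2:ℝ) ^ ℓ else 0) else 0) := by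
    intro j
    rcases eq_or_ne j (-ℓ) with rfl | hj
    · have h1 : (2:ℝ) ^ (-(-ℓ)) < (2:ℝ) ^ (ℓ+1) := by
        rw [zpow_lt_zpow_iff_right₀ (by norm_num : (1:ℝ) < 2)]; omega
      have h2 : ¬ ((2:ℝ) ^ (-(-ℓ)) < (2:ℝ) ^ ℓ) := by
        rw [zpow_lt_zpow_iff_right₀ (by norm_num : (1:ℝ) < 2)]; omega
      by_cases hb : β (-ℓ) i = true <;> simp [h1, h2, hb, neg_neg]
    · have hiff : ((2:ℝ) ^ (-j) < (2:ℝ) ^ (ℓ+1)) ↔ ((2:ℝ) ^ (-j) < (2:ℝ) ^ ℓ) := by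
        rw [zpow_lt_zpow_iff_right₀ (by norm_num : (1:ℝ) < 2),
          zpow_lt_zpow_iff_right₀ (by norm_num : (1:ℝ) < 2)]
        omega
      rw [if_neg hj, add_zero]
      exact if_congr (and_congr_left' hiff) rfl rfl
  rw [tsum_congr hpt,
    Summable.tsum_add (summable_gridShiftTerm β ℓ i) (hasSum_ite_eq (-ℓ) _).summable,
    tsum_ite_eq]

lemma grid_parent (β : ℤ → Fin n → Bool) (Q : Cube n) (hQ : memGrid β Q) :
    ∃ Q' : Cube n, memGrid β Q' ∧ Q'.side = 2 * Q.side ∧ Q.toSet ⊆ Q'.toSet := by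
  obtain ⟨ℓ, k, hside, hcorner⟩ := hQ
  set b : Fin n → ℤ := fun i => if β (-ℓ) i = true then 1 else 0 with hb
  set k' : Fin n → ℤ := fun i => (k i - b i) / 2 with hk'
  have hpos : (0:ℝ) < (2:ℝ) ^ (ℓ+1) := zpow_pos (by norm_num) _
  refine ⟨⟨fun i => (2:ℝ) ^ (ℓ+1) * (k' i : ℝ) + gridShift β (ℓ+1) i, (2:ℝ) ^ (ℓ+1), hpos⟩,
    ⟨ℓ+1, k', rfl, fun i => rfl⟩, ?_, ?_⟩
  · show (2:ℝ) ^ (ℓ+1) = 2 * Q.side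
    rw [hside, zpow_add_one₀ (two_ne_zero), mul_comm]
  · rw [toSet_subset_iff]
    intro i
    have hd : 2 * k' i + (k i - b i) % 2 = k i - b i := Int.mul_ediv_add_emod _ _
    have hr0 : 0 ≤ (k i - b i) % 2 := Int.emod_nonneg _ (by norm_num)
    have hr1 : (k i - b i) % 2 < 2 := Int.emod_lt_of_pos _ (by norm_num)
    have hbr : ((b i : ℝ)) * (2:ℝ)^ℓ = (if β (-ℓ) i = true then (2:ℝ) ^ ℓ else 0) := by
      by_cases hβ : β (-ℓ) i = true
      · simp [hb, hβ]
      · simp [hb, hβ]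
    have hc' : (2:ℝ) ^ (ℓ+1) * (k' i : ℝ) + gridShift β (ℓ+1) i
        = (2:ℝ)^ℓ * ((2 * k' i + b i : ℤ) : ℝ) + gridShift β ℓ i := by
      rw [gridShift_succ, ← hbr, zpow_add_one₀ (two_ne_zero)]
      push_cast
      ring
    have hkb1 : (2 * k' i + b i : ℤ) ≤ k i := by omega
    have hkb2 : (k i : ℤ) + 1 ≤ 2 * k' i + b i + 2 := by omega
    have hp : (0:ℝ) < (2:ℝ) ^ ℓ := zpow_pos (by norm_num) _
    have hcast1 : ((2 * k' i + b i : ℤ) : ℝ) ≤ (k i : ℝ) := by exact_mod_cast hkb1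
    have hcast2 : ((k i : ℝ)) + 1 ≤ ((2 * k' i + b i : ℤ) : ℝ) + 2 := by exact_mod_cast hkb2
    constructor
    · show (2:ℝ) ^ (ℓ+1) * (k' i : ℝ) + gridShift β (ℓ+1) i ≤ Q.corner i
      rw [hc', hcorner i]
      nlinarith
    · show Q.corner i + Q.side
        ≤ (2:ℝ) ^ (ℓ+1) * (k' i : ℝ) + gridShift β (ℓ+1) i + (2:ℝ) ^ (ℓ+1)
      rw [hc', hcorner i, hside, zpow_add_one₀ (two_ne_zero)]
      nlinarith

lemma grid_eq_of_same_side (β : ℤ → Fin n → Bool) (Q Q' : Cube n)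
    (hQ : memGrid β Q) (hQ' : memGrid β Q') (hs : Q.side = Q'.side)
    (x : Fin n → ℝ) (hx : x ∈ Q.toSet) (hx' : x ∈ Q'.toSet) : Q.toSet = Q'.toSet := by
  obtain ⟨ℓ, k, hside, hcorner⟩ := hQ
  obtain ⟨ℓ', k', hside', hcorner'⟩ := hQ'
  have hℓ : ℓ = ℓ' := by
    have : (2:ℝ) ^ ℓ = (2:ℝ) ^ ℓ' := by rw [← hside, ← hside', hs]
    exact zpow_right_injective₀ (by norm_num) (by norm_num) this
  subst hℓ
  have hp : (0:ℝ) < (2:ℝ) ^ ℓ := zpow_pos (by norm_num) _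
  have hck : ∀ i, Q.corner i = Q'.corner i := by
    intro i
    have h1 := hx i
    have h2 := hx' i
    rw [hcorner i] at h1
    rw [hcorner' i] at h2
    rw [hside] at h1
    rw [hside'] at h2
    have hkk : k i = k' i := by
      have l1 : (2:ℝ)^ℓ * (k i : ℝ) < (2:ℝ)^ℓ * ((k' i : ℝ) + 1) := by nlinarith [h1.1, h2.2]
      have l2 : (2:ℝ)^ℓ * (k' i : ℝ) < (2:ℝ)^ℓ * ((k i : ℝ) + 1) := by nlinarith [h2.1, h1.2]
      have m1 : (k i : ℝ) < (k' i : ℝ) + 1 := by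
        have := (mul_lt_mul_iff_right₀ hp).mp l1; linarith
      have m2 : (k' i : ℝ) < (k i : ℝ) + 1 := by
        have := (mul_lt_mul_iff_right₀ hp).mp l2; linarith
      have : (k i : ℤ) < k' i + 1 := by exact_mod_cast m1
      have : (k' i : ℤ) < k i + 1 := by exact_mod_cast m2
      omega
    rw [hcorner i, hcorner' i, hkk]
  ext y
  simp only [Cube.toSet, Set.mem_setOf_eq]
  constructor <;> intro h i
  · rw [← hck i, ← hs]; exact h i
  · rw [hck i, hs]; exact h i

lemma grid_nested (β : ℤ → Fin n → Bool) :
    ∀ d : ℕ, ∀ Q Q' : Cube n, memGrid β Q → memGrid β Q' →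
      Q'.side = 2 ^ d * Q.side →
      ∀ x, x ∈ Q.toSet → x ∈ Q'.toSet → Q.toSet ⊆ Q'.toSet := by
  intro d
  induction d with
  | zero =>
    intro Q Q' hQ hQ' hside x hx hx'
    rw [grid_eq_of_same_side β Q Q' hQ hQ' (by rw [hside]; ring) x hx hx']
  | succ d ih =>
    intro Q Q' hQ hQ' hside x hx hx'
    obtain ⟨P, hP, hPside, hQP⟩ := grid_parent β Q hQ
    have h2 : Q'.side = 2 ^ d * P.side := by rw [hPside, hside]; ring
    exact hQP.trans (ih P Q' hP hQ' h2 x (hQP hx) hx')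

lemma grid_subset_of_le (β : ℤ → Fin n → Bool) (Q Q' : Cube n)
    (hQ : memGrid β Q) (hQ' : memGrid β Q') {ℓ ℓ' : ℤ}
    (hs : Q.side = (2:ℝ)^ℓ) (hs' : Q'.side = (2:ℝ)^ℓ') (hll : ℓ ≤ ℓ')
    (x : Fin n → ℝ) (hx : x ∈ Q.toSet) (hx' : x ∈ Q'.toSet) : Q.toSet ⊆ Q'.toSet := by
  apply grid_nested β (ℓ' - ℓ).toNat Q Q' hQ hQ' _ x hx hx'
  rw [hs, hs']
  rw [← zpow_natCast (2:ℝ) (ℓ' - ℓ).toNat, Int.toNat_of_nonneg (by omega), ← zpow_add₀ two_ne_zero]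
  congr 1
  omega

lemma le_dyadicMaximal_of (β : ℤ → Fin n → Bool) (μ : Measure (Fin n → ℝ))
    (Q : Cube n) (hQ : memGrid β Q) (x : Fin n → ℝ) (hx : x ∈ Q.toSet) :
    μ Q.toSet / volume Q.toSet ≤ dyadicMaximal β μ x :=
  le_iSup_of_le Q (le_iSup_of_le hQ (le_iSup_of_le hx le_rfl))

lemma le_maximal_of (μ : Measure (Fin n → ℝ))
    (Q : Cube n) (hQ : Q.memP) (x : Fin n → ℝ) (hx : x ∈ Q.toSet) :
    μ Q.toSet / volume Q.toSet ≤ maximal μ x :=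
  le_iSup_of_le Q (le_iSup_of_le hQ (le_iSup_of_le hx le_rfl))

lemma dyadicMaximal_subadd (β : ℤ → Fin n → Bool) (μ : Measure (Fin n → ℝ))
    (S : Set (Fin n → ℝ)) (hS : MeasurableSet S) (x : Fin n → ℝ) :
    dyadicMaximal β μ x
      ≤ dyadicMaximal β (μ.restrict S) x + dyadicMaximal β (μ.restrict Sᶜ) x := by
  refine iSup_le fun Q' => iSup_le fun hg => iSup_le fun hx' => ?_
  have hsplit : μ Q'.toSet = (μ.restrict S) Q'.toSet + (μ.restrict Sᶜ) Q'.toSet := by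
    conv_lhs => rw [← Measure.restrict_add_restrict_compl (μ := μ) hS]
    simp
  rw [hsplit, ← ENNReal.div_add_div_same]
  exact add_le_add (le_dyadicMaximal_of β _ Q' hg x hx') (le_dyadicMaximal_of β _ Q' hg x hx')

end AuxLemmas

/-- **Maximum principle for the dyadic maximal function.**
If `σ` is locally finite, `f ≥ 0` is bounded, measurable, compactly supported,
`Ω_k = {M(fσ) > 2^k}`, `𝒟^β` is a shifted dyadic grid, `R_W ≥ 3`, and `Q ∈ 𝒟^β` is a
cube with `3R_W Q ∩ Ω_kᶜ ≠ ∅`, then `M^𝒟(1_{Qᶜ} fσ)(x) ≤ 2(3R_W)ⁿ · 2^k` on `Q`.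
Consequently, if `2^{m−1} ≥ 2(3R_W)ⁿ` then every `x ∈ Q` with `M^𝒟(fσ)(x) > 2^{k+m}`
satisfies `M^𝒟(1_Q fσ)(x) > 2^{k+m−1}`. -/
theorem dyadic_maximum_principle
    {n : ℕ} (σ : Measure (Fin n → ℝ)) (hσ : IsLocallyFiniteMeasure σ)
    (f : (Fin n → ℝ) → ℝ≥0∞) (hf : Measurable f)
    (C : ℝ≥0) (hbdd : ∀ x, f x ≤ (C : ℝ≥0∞))
    (hsupp : ∃ K : Set (Fin n → ℝ), IsCompact K ∧ ∀ x ∉ K, f x = 0)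
    (k : ℤ) (β : ℤ → Fin n → Bool) (R_W : ℝ) (hRW : 3 ≤ R_W)
    (Q : Cube n) (hQ : memGrid β Q)
    (hout : (Q.dilate (3 * R_W) ∩
      {x | (2 : ℝ≥0∞) ^ k < maximal (σ.withDensity f) x}ᶜ).Nonempty) :
    (∀ x ∈ Q.toSet,
      dyadicMaximal β ((σ.withDensity f).restrict Q.toSetᶜ) x
        ≤ ENNReal.ofReal (2 * (3 * R_W) ^ n) * (2 : ℝ≥0∞) ^ k) ∧
    (∀ m : ℕ, ENNReal.ofReal (2 * (3 * R_W) ^ n) ≤ (2 : ℝ≥0∞) ^ ((m : ℤ) - 1) →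
      ∀ x ∈ Q.toSet,
        (2 : ℝ≥0∞) ^ (k + (m : ℤ)) < dyadicMaximal β (σ.withDensity f) x →
        (2 : ℝ≥0∞) ^ (k + (m : ℤ) - 1) <
          dyadicMaximal β ((σ.withDensity f).restrict Q.toSet) x) := by
  obtain ⟨z, hz_dil, hz_out⟩ := hout
  simp only [Set.mem_compl_iff, Set.mem_setOf_eq, not_lt] at hz_out
  simp only [Cube.dilate, Set.mem_setOf_eq] at hz_dil
  set μ := σ.withDensity f with hμdef
  obtain ⟨ℓQ, kQ, hQside, -⟩ := id hQ
  have key : ∀ x ∈ Q.toSet,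
      dyadicMaximal β (μ.restrict Q.toSetᶜ) x
        ≤ ENNReal.ofReal (2 * (3 * R_W) ^ n) * (2 : ℝ≥0∞) ^ k := by
    intro x hx
    refine iSup_le fun Q' => iSup_le fun hg' => iSup_le fun hx' => ?_
    obtain ⟨ℓ', k', hside', -⟩ := id hg'
    rcases le_or_gt ℓ' ℓQ with hle | hlt
    · -- Q' ⊆ Q : the restricted measure vanishes on Q'
      have hsub : Q'.toSet ⊆ Q.toSet :=
        grid_subset_of_le β Q' Q hg' hQ hside' hQside hle x hx' hx
      have hzero : (μ.restrict Q.toSetᶜ) Q'.toSet = 0 := by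
        rw [Measure.restrict_apply (cube_measurable Q')]
        have he : Q'.toSet ∩ Q.toSetᶜ = ∅ := by
          rw [Set.eq_empty_iff_forall_notMem]
          intro y hy
          exact hy.2 (hsub hy.1)
        rw [he, measure_empty]
      rw [hzero, ENNReal.zero_div]
      exact zero_le
    · -- Q ⊊ Q'
      have hsub : Q.toSet ⊆ Q'.toSet :=
        grid_subset_of_le β Q Q' hQ hg' hQside hside' hlt.le x hx hx'
      have hcc := (toSet_subset_iff Q Q').mp hsub
      have hspos : 0 < Q.side := Q.side_pos
      have hs'pos : 0 < Q'.side := Q'.side_pos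
      have hhalf : 2 * Q.side ≤ Q'.side := by
        calc 2 * Q.side = (2:ℝ) ^ (ℓQ + 1) := by
              rw [hQside, zpow_add_one₀ (two_ne_zero : (2:ℝ) ≠ 0)]; ring
          _ ≤ (2:ℝ) ^ ℓ' := zpow_le_zpow_right₀ one_le_two (by omega)
          _ = Q'.side := hside'.symm
      set a : ℤ := ⌈Real.logb 2 ((3 * R_W + 3) / 4)⌉ with ha
      have hr₀pos : (0:ℝ) < (3 * R_W + 3) / 4 := by linarith
      have h2a_lb : (3 * R_W + 3) / 4 ≤ (2:ℝ) ^ a := by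
        have h1 : Real.logb 2 ((3 * R_W + 3) / 4) ≤ (a:ℝ) := Int.le_ceil _
        calc (3 * R_W + 3) / 4
            = (2:ℝ) ^ (Real.logb 2 ((3 * R_W + 3) / 4)) :=
              (Real.rpow_logb (by norm_num) (by norm_num) hr₀pos).symm
          _ ≤ (2:ℝ) ^ ((a:ℝ)) := by
              exact (Real.rpow_le_rpow_left_iff (by norm_num)).mpr h1
          _ = (2:ℝ) ^ a := Real.rpow_intCast 2 a
      have h2a_ub : (2:ℝ) ^ a ≤ 2 * ((3 * R_W + 3) / 4) := by
        have h1 : (a:ℝ) ≤ Real.logb 2 ((3 * R_W + 3) / 4) + 1 := by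
          have := Int.ceil_lt_add_one (Real.logb 2 ((3 * R_W + 3) / 4))
          exact_mod_cast this.le
        calc (2:ℝ) ^ a = (2:ℝ) ^ ((a:ℝ)) := (Real.rpow_intCast 2 a).symm
          _ ≤ (2:ℝ) ^ (Real.logb 2 ((3 * R_W + 3) / 4) + 1) :=
              (Real.rpow_le_rpow_left_iff (by norm_num)).mpr h1
          _ = 2 * ((3 * R_W + 3) / 4) := by
              rw [Real.rpow_add (by norm_num),
                Real.rpow_logb (by norm_num) (by norm_num) hr₀pos, Real.rpow_one]
              ring
      have h2apos : (0:ℝ) < (2:ℝ) ^ a := zpow_pos (by norm_num) _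
      have htpos : (0:ℝ) < (2:ℝ) ^ (ℓ' + a) := zpow_pos (by norm_num) _
      have ht_eq : (2:ℝ) ^ (ℓ' + a) = (2:ℝ) ^ a * Q'.side := by
        rw [hside', zpow_add₀ (two_ne_zero : (2:ℝ) ≠ 0)]; ring
      have ht_lb : Q'.side + (3 * R_W - 1) * Q.side / 2 ≤ (2:ℝ) ^ (ℓ' + a) := by
        rw [ht_eq]
        have hint1 : (3 * R_W - 1) * (2 * Q.side) ≤ (3 * R_W - 1) * Q'.side :=
          mul_le_mul_of_nonneg_left hhalf (by linarith)
        have hint2 : (3 * R_W + 3) / 4 * Q'.side ≤ (2:ℝ) ^ a * Q'.side :=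
          mul_le_mul_of_nonneg_right h2a_lb hs'pos.le
        linarith
      have ht_ub : (2:ℝ) ^ (ℓ' + a) ≤ 3 * R_W * Q'.side := by
        rw [ht_eq]
        have hint2 : (2:ℝ) ^ a * Q'.side ≤ 2 * ((3 * R_W + 3) / 4) * Q'.side :=
          mul_le_mul_of_nonneg_right h2a_ub hs'pos.le
        have hint3 : 3 * Q'.side ≤ R_W * Q'.side :=
          mul_le_mul_of_nonneg_right hRW hs'pos.le
        linarith
      set P : Cube n := ⟨fun i => min (z i) (Q'.corner i), (2:ℝ) ^ (ℓ' + a), htpos⟩ with hPdef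
      have hPmem : P.memP := ⟨ℓ' + a, rfl⟩
      have hz_bounds : ∀ i, Q'.corner i - (3 * R_W - 1) * Q.side / 2 ≤ z i ∧
          z i < Q'.corner i + Q'.side + (3 * R_W - 1) * Q.side / 2 := by
        intro i
        have h1 := hz_dil i
        have h2 := hcc i
        constructor
        · linarith [h1.1, h2.1]
        · linarith [h1.2, h2.2]
      have hzP : z ∈ P.toSet := by
        intro i
        refine ⟨min_le_left _ _, ?_⟩
        show z i < min (z i) (Q'.corner i) + (2:ℝ) ^ (ℓ' + a)
        rcases le_total (z i) (Q'.corner i) with h | h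
        · rw [min_eq_left h]; linarith
        · rw [min_eq_right h]
          have := (hz_bounds i).2
          linarith
      have hQ'P : Q'.toSet ⊆ P.toSet := by
        rw [toSet_subset_iff]
        intro i
        refine ⟨min_le_right _ _, ?_⟩
        show Q'.corner i + Q'.side ≤ min (z i) (Q'.corner i) + (2:ℝ) ^ (ℓ' + a)
        rcases le_total (z i) (Q'.corner i) with h | h
        · rw [min_eq_left h]
          have := (hz_bounds i).1
          linarith
        · rw [min_eq_right h]
          have hA : (0:ℝ) ≤ (3 * R_W - 1) * Q.side / 2 := by
            have : (0:ℝ) ≤ 3 * R_W - 1 := by linarith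
            positivity
          linarith
      have hmax : μ P.toSet / volume P.toSet ≤ (2:ℝ≥0∞) ^ k :=
        (le_maximal_of μ P hPmem z hzP).trans hz_out
      have hvolP : volume P.toSet = ENNReal.ofReal (((2:ℝ) ^ (ℓ' + a)) ^ n) := cube_volume P
      have hvolQ' : volume Q'.toSet = ENNReal.ofReal (Q'.side ^ n) := cube_volume Q'
      have hvol0 : volume P.toSet ≠ 0 := by
        rw [hvolP]
        exact (ENNReal.ofReal_pos.mpr (by positivity)).ne'
      have hvolt : volume P.toSet ≠ ⊤ := by rw [hvolP]; exact ENNReal.ofReal_ne_top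
      have hμP : μ P.toSet ≤ (2:ℝ≥0∞) ^ k * volume P.toSet :=
        (ENNReal.div_le_iff hvol0 hvolt).mp hmax
      have hratio : volume P.toSet / volume Q'.toSet ≤ ENNReal.ofReal (2 * (3 * R_W) ^ n) := by
        rw [hvolP, hvolQ']
        apply ENNReal.div_le_of_le_mul
        rw [← ENNReal.ofReal_mul (by
          have h9 : (0:ℝ) < 3 * R_W := by linarith
          positivity)]
        apply ENNReal.ofReal_le_ofReal
        have h3 : (0:ℝ) ≤ (3 * R_W) ^ n := pow_nonneg (by linarith) n
        have h4 : (0:ℝ) ≤ Q'.side ^ n := pow_nonneg hs'pos.le n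
        calc ((2:ℝ) ^ (ℓ' + a)) ^ n ≤ (3 * R_W * Q'.side) ^ n :=
              pow_le_pow_left₀ htpos.le ht_ub n
          _ = (3 * R_W) ^ n * Q'.side ^ n := mul_pow _ _ _
          _ ≤ 2 * (3 * R_W) ^ n * Q'.side ^ n := by nlinarith
      calc (μ.restrict Q.toSetᶜ) Q'.toSet / volume Q'.toSet
          ≤ μ Q'.toSet / volume Q'.toSet :=
            ENNReal.div_le_div_right (Measure.le_iff'.1 Measure.restrict_le_self _) _
        _ ≤ μ P.toSet / volume Q'.toSet :=
            ENNReal.div_le_div_right (measure_mono hQ'P) _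
        _ ≤ ((2:ℝ≥0∞) ^ k * volume P.toSet) / volume Q'.toSet :=
            ENNReal.div_le_div_right hμP _
        _ = (2:ℝ≥0∞) ^ k * (volume P.toSet / volume Q'.toSet) := mul_div_assoc _ _ _
        _ ≤ (2:ℝ≥0∞) ^ k * ENNReal.ofReal (2 * (3 * R_W) ^ n) :=
            mul_le_mul_right hratio _
        _ = ENNReal.ofReal (2 * (3 * R_W) ^ n) * (2:ℝ≥0∞) ^ k := mul_comm _ _
  refine ⟨key, ?_⟩
  intro m hm x hx hlt
  have hBle : dyadicMaximal β (μ.restrict Q.toSetᶜ) x ≤ (2:ℝ≥0∞) ^ (k + (m:ℤ) - 1) := by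
    refine (key x hx).trans ?_
    calc ENNReal.ofReal (2 * (3 * R_W) ^ n) * (2:ℝ≥0∞) ^ k
        ≤ (2:ℝ≥0∞) ^ ((m:ℤ) - 1) * (2:ℝ≥0∞) ^ k := mul_le_mul_left hm _
      _ = (2:ℝ≥0∞) ^ (k + (m:ℤ) - 1) := by
          rw [← ENNReal.zpow_add (two_ne_zero) ENNReal.ofNat_ne_top]
          congr 1; ring
  have hsplit := dyadicMaximal_subadd β μ Q.toSet (cube_measurable Q) x
  by_contra hcon
  push_neg at hcon
  have hlt2 : (2:ℝ≥0∞) ^ (k + (m:ℤ)) <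
      (2:ℝ≥0∞) ^ (k + (m:ℤ) - 1) + (2:ℝ≥0∞) ^ (k + (m:ℤ) - 1) :=
    hlt.trans_le (hsplit.trans (add_le_add hcon hBle))
  have heq : (2:ℝ≥0∞) ^ (k + (m:ℤ)) =
      (2:ℝ≥0∞) ^ (k + (m:ℤ) - 1) + (2:ℝ≥0∞) ^ (k + (m:ℤ) - 1) := by
    have h1 : (2:ℝ≥0∞) ^ (k + (m:ℤ)) = (2:ℝ≥0∞) ^ ((1:ℤ) + (k + (m:ℤ) - 1)) := by
      congr 1; ring
    rw [h1, ENNReal.zpow_add (two_ne_zero) ENNReal.ofNat_ne_top, zpow_one, two_mul]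
  rw [← heq] at hlt2
  exact lt_irrefl _ hlt2
end
end

section
/- Let μ be a locally finite positive Borel measure on ℝ^n. Then for every locally finite positive Borel measure f and every x ∈ ℝ^n: M^null f(x) ≤ M f(x) ≤ 2^{n+3} M^null f(x), where M^null is the maximal function restricted to cubes belonging to shifted dyadic grids all of whose cubes have μ-null boundary. In particular M^null f and M f are pointwise comparable with constants depending only on n. -/
open MeasureTheory Set Filter
open scoped ENNReal NNReal

noncomputable section

/-- The grid `𝒟^β` has `μ`-null boundaries: every cube of the grid has `μ`-null
topological boundary. -/
def nullBoundaryGrid {n : ℕ} (μ : Measure (Fin n → ℝ)) (β : ℤ → Fin n → Bool) : Prop :=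
  ∀ Q : Cube n, memGrid β Q → μ (frontier Q.toSet) = 0

/-- The maximal function `M^null` restricted to cubes belonging to shifted dyadic grids
all of whose cubes have `μ`-null boundary. -/
def maximalNull {n : ℕ} (μ f : Measure (Fin n → ℝ)) (x : Fin n → ℝ) : ℝ≥0∞ :=
  ⨆ (Q : Cube n) (_ : ∃ β : ℤ → Fin n → Bool, nullBoundaryGrid μ β ∧ memGrid β Q)
    (_ : x ∈ Q.toSet), f Q.toSet / volume Q.toSet

namespace MaxAux


/-- `h t j = t - 2^{-j} ⌊t 2^j⌋`, the tail of the binary expansion of `t` below scale `2^{-j}`. -/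
def tail (t : ℝ) (j : ℤ) : ℝ := t - (2:ℝ) ^ (-j) * (⌊t * (2:ℝ) ^ j⌋ : ℝ)

lemma tail_nonneg (t : ℝ) (j : ℤ) : 0 ≤ tail t j := by
  have hp : (0:ℝ) < (2:ℝ) ^ j := zpow_pos (by norm_num) j
  have h1 : ((⌊t * (2:ℝ) ^ j⌋ : ℝ)) ≤ t * (2:ℝ) ^ j := Int.floor_le _
  have h2 : (2:ℝ) ^ (-j) = ((2:ℝ) ^ j)⁻¹ := zpow_neg 2 j
  have h3 : ((2:ℝ) ^ j)⁻¹ * (2:ℝ) ^ j = 1 := inv_mul_cancel₀ hp.ne'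
  rw [tail, h2]
  have h4 : ((2:ℝ) ^ j)⁻¹ * ((⌊t * (2:ℝ) ^ j⌋ : ℝ)) ≤ ((2:ℝ) ^ j)⁻¹ * (t * (2:ℝ) ^ j) :=
    mul_le_mul_of_nonneg_left h1 (inv_pos.2 hp).le
  have h5 : ((2:ℝ) ^ j)⁻¹ * (t * (2:ℝ) ^ j) = t := by
    field_simp
  linarith

lemma tail_lt (t : ℝ) (j : ℤ) : tail t j < (2:ℝ) ^ (-j) := by
  have hp : (0:ℝ) < (2:ℝ) ^ j := zpow_pos (by norm_num) j
  have h1 : t * (2:ℝ) ^ j < (⌊t * (2:ℝ) ^ j⌋ : ℝ) + 1 := Int.lt_floor_add_one _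
  have h2 : (2:ℝ) ^ (-j) = ((2:ℝ) ^ j)⁻¹ := zpow_neg 2 j
  have h3 : ((2:ℝ) ^ j)⁻¹ * (2:ℝ) ^ j = 1 := inv_mul_cancel₀ hp.ne'
  rw [tail, h2]
  have h4 : ((2:ℝ) ^ j)⁻¹ * (t * (2:ℝ) ^ j) < ((2:ℝ) ^ j)⁻¹ * (((⌊t * (2:ℝ) ^ j⌋ : ℝ)) + 1) :=
    mul_lt_mul_of_pos_left h1 (inv_pos.2 hp)
  have h5 : ((2:ℝ) ^ j)⁻¹ * (t * (2:ℝ) ^ j) = t := by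
    field_simp
  have h6 : ((2:ℝ) ^ j)⁻¹ * (((⌊t * (2:ℝ) ^ j⌋ : ℝ)) + 1) = ((2:ℝ) ^ j)⁻¹ * ((⌊t * (2:ℝ) ^ j⌋ : ℝ)) + ((2:ℝ) ^ j)⁻¹ := by ring
  linarith

lemma term_eq (t : ℝ) (j : ℤ) :
    (if ⌊t * (2:ℝ) ^ j⌋ % 2 = 1 then (2:ℝ) ^ (-j) else 0) = tail t (j - 1) - tail t j := by
  set a : ℤ := ⌊t * (2:ℝ) ^ (j-1)⌋ with ha
  set b : ℤ := ⌊t * (2:ℝ) ^ j⌋ with hb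
  have h2j : t * (2:ℝ) ^ j = 2 * (t * (2:ℝ) ^ (j-1)) := by
    rw [zpow_sub_one₀ (by norm_num : (2:ℝ) ≠ 0)]; ring
  have hba1 : 2 * a ≤ b := by
    rw [hb]
    refine Int.le_floor.2 ?_
    push_cast
    rw [h2j]
    have := Int.floor_le (t * (2:ℝ) ^ (j-1))
    linarith
  have hba2 : b < 2 * a + 2 := by
    rw [hb]
    refine Int.floor_lt.2 ?_
    push_cast
    rw [h2j]
    have := Int.lt_floor_add_one (t * (2:ℝ) ^ (j-1))
    linarith
  have hneg : (2:ℝ) ^ (-(j-1)) = 2 * (2:ℝ) ^ (-j) := by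
    have : -(j-1) = -j + 1 := by ring
    rw [this, zpow_add₀ (by norm_num : (2:ℝ) ≠ 0), zpow_one]; ring
  have hlhs : tail t (j - 1) - tail t j = (2:ℝ) ^ (-j) * ((b : ℝ) - 2 * a) := by
    simp only [tail, ← ha, ← hb, hneg]; ring
  by_cases hmod : b % 2 = 1
  · have : b = 2 * a + 1 := by omega
    rw [if_pos hmod, hlhs, this]; push_cast; ring
  · have : b = 2 * a := by omega
    rw [if_neg hmod, hlhs, this]; push_cast; ring

lemma hasSum_digits (t : ℝ) (m : ℤ) :
    HasSum (fun j : ℤ => if (2:ℝ) ^ (-j) < (2:ℝ) ^ m ∧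
        (decide (⌊t * (2:ℝ) ^ j⌋ % 2 = 1) = true) then (2:ℝ) ^ (-j) else 0)
      (t - (2:ℝ) ^ m * (⌊t * (2:ℝ) ^ (-m)⌋ : ℝ)) := by
  set F : ℤ → ℝ := fun j => if (2:ℝ) ^ (-j) < (2:ℝ) ^ m ∧
      (decide (⌊t * (2:ℝ) ^ j⌋ % 2 = 1) = true) then (2:ℝ) ^ (-j) else 0 with hF
  have hFnonneg : ∀ j, 0 ≤ F j := by
    intro j; rw [hF]; dsimp only; split
    · positivity
    · exact le_rfl
  have hcond : ∀ j : ℤ, ((2:ℝ) ^ (-j) < (2:ℝ) ^ m ↔ 1 - m ≤ j) := by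
    intro j
    rw [zpow_lt_zpow_iff_right₀ (by norm_num : (1:ℝ) < 2)]
    omega
  have hterm : ∀ j : ℤ, 1 - m ≤ j → F j = tail t (j - 1) - tail t j := by
    intro j hj
    rw [hF]; dsimp only
    rw [← term_eq t j]
    by_cases hd : ⌊t * (2:ℝ) ^ j⌋ % 2 = 1
    · rw [if_pos ⟨(hcond j).2 hj, by simp [hd]⟩, if_pos hd]
    · rw [if_neg (by simp [hd]), if_neg hd]
  set e : ℕ → ℤ := fun k => (1 - m) + k with he
  have hinj : Function.Injective e := by
    intro a b hab; simpa [he] using hab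
  have hzero : ∀ j ∉ Set.range e, F j = 0 := by
    intro j hj
    have hjlt : j < 1 - m := by
      by_contra hge
      exact hj ⟨(j - (1 - m)).toNat, by simp [he]; omega⟩
    rw [hF]; dsimp only
    rw [if_neg]
    rintro ⟨hlt, -⟩
    have := (hcond j).1 hlt
    omega
  rw [← Function.Injective.hasSum_iff hinj hzero]
  set H : ℕ → ℝ := fun k => tail t (-m + k) with hH
  have hcomp : (F ∘ e) = fun k => H k - H (k + 1) := by
    funext k
    have h1 : e k - 1 = -m + (k : ℤ) := by simp [he]; ring
    have h2 : e k = -m + ((k : ℕ) + 1 : ℕ) := by simp [he]; push_cast; ring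
    calc (F ∘ e) k = tail t (e k - 1) - tail t (e k) := hterm (e k) (by simp [he])
    _ = H k - H (k+1) := by rw [hH]; dsimp only; rw [h1, h2]
  rw [hcomp]
  have hnn : ∀ k : ℕ, 0 ≤ H k - H (k + 1) := by
    intro k
    have := hFnonneg (e k)
    rw [← congrFun hcomp k] at *
    exact this
  rw [hasSum_iff_tendsto_nat_of_nonneg hnn]
  have hsum : ∀ N : ℕ, ∑ k ∈ Finset.range N, (H k - H (k + 1)) = H 0 - H N :=
    fun N => Finset.sum_range_sub' H N
  simp only [hsum]
  have hH0 : H 0 = t - (2:ℝ) ^ m * (⌊t * (2:ℝ) ^ (-m)⌋ : ℝ) := by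
    rw [hH]; dsimp only; rw [tail]; norm_num
  have hHlim : Tendsto H atTop (nhds 0) := by
    apply squeeze_zero (fun N => tail_nonneg t _) (fun N => (tail_lt t _).le)
    have heq : ∀ N : ℕ, (2:ℝ) ^ (-(-m + (N:ℤ))) = (2:ℝ) ^ m * ((2:ℝ)⁻¹) ^ N := by
      intro N
      rw [neg_add, neg_neg, zpow_add₀ (by norm_num : (2:ℝ) ≠ 0), zpow_neg, zpow_natCast, inv_pow]
    simp only [heq]
    rw [← mul_zero ((2:ℝ)^m)]
    exact (tendsto_pow_atTop_nhds_zero_of_lt_one (by norm_num) (by norm_num)).const_mul _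
  rw [← hH0, ← sub_zero (H 0)] at *
  exact (tendsto_const_nhds.sub hHlim).congr (fun N => rfl) |>.congr' (by simp)


section CubeAux
variable {n : ℕ}



lemma cube_toSet_eq (Q : Cube n) :
    Q.toSet = Set.univ.pi (fun i => Set.Ico (Q.corner i) (Q.corner i + Q.side)) := by
  ext x
  simp [Cube.toSet, Set.mem_univ_pi, Set.mem_Ico]

lemma cube_volume (Q : Cube n) : volume Q.toSet = ENNReal.ofReal (Q.side ^ n) := by
  rw [cube_toSet_eq, volume_pi_pi]
  simp only [Real.volume_Ico, add_sub_cancel_left]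
  rw [Finset.prod_const, Finset.card_univ, Fintype.card_fin, ← ENNReal.ofReal_pow Q.side_pos.le]

lemma cube_frontier_subset (Q : Cube n) :
    frontier Q.toSet ⊆
      ⋃ i, ({x : Fin n → ℝ | x i = Q.corner i} ∪ {x | x i = Q.corner i + Q.side}) := by
  intro x hx
  have hcl : closure Q.toSet ⊆ Set.univ.pi (fun i => Set.Icc (Q.corner i) (Q.corner i + Q.side)) := by
    apply closure_minimal
    · rw [cube_toSet_eq]
      exact Set.pi_mono fun i _ => Set.Ico_subset_Icc_self
    · exact isClosed_set_pi fun i _ => isClosed_Icc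
  have hint : Set.univ.pi (fun i => Set.Ioo (Q.corner i) (Q.corner i + Q.side)) ⊆
      interior Q.toSet := by
    apply interior_maximal
    · rw [cube_toSet_eq]
      exact Set.pi_mono fun i _ => Set.Ioo_subset_Ico_self
    · exact isOpen_set_pi Set.finite_univ fun i _ => isOpen_Ioo
  have h1 := hcl hx.1
  have h2 : x ∉ Set.univ.pi (fun i => Set.Ioo (Q.corner i) (Q.corner i + Q.side)) :=
    fun h => hx.2 (hint h)
  rw [Set.mem_univ_pi] at h1
  simp only [Set.mem_univ_pi, not_forall] at h2
  obtain ⟨i, hi⟩ := h2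
  have hIcc := h1 i
  rw [Set.mem_Icc] at hIcc
  rw [Set.mem_Ioo] at hi
  refine Set.mem_iUnion.2 ⟨i, ?_⟩
  rcases eq_or_lt_of_le hIcc.1 with h | h
  · exact Or.inl h.symm
  · rcases eq_or_lt_of_le hIcc.2 with h' | h'
    · exact Or.inr h'
    · exact absurd ⟨h, h'⟩ hi


end CubeAux
end MaxAux

/-- **Pointwise comparability of `M^null` and `M`.** For every locally finite positive
Borel measure `μ` on `ℝⁿ`, every locally finite positive Borel measure `f`, and every
`x ∈ ℝⁿ`: `M^null f(x) ≤ M f(x) ≤ 2^{n+3} M^null f(x)`. -/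

theorem maximalNull_equiv_maximal
    {n : ℕ} (μ f : Measure (Fin n → ℝ))
    (hμ : IsLocallyFiniteMeasure μ) (hf : IsLocallyFiniteMeasure f) (x : Fin n → ℝ) :
    maximalNull μ f x ≤ maximal f x ∧
      maximal f x ≤ 2 ^ (n + 3) * maximalNull μ f x := by
  constructor
  · refine iSup_le fun Q => iSup_le fun hQ => iSup_le fun hx => ?_
    obtain ⟨β, hnull, m, k, hside, hcorner⟩ := hQ
    exact le_iSup_of_le Q (le_iSup_of_le ⟨m, hside⟩ (le_iSup_of_le hx le_rfl))
  · refine iSup_le fun Q => iSup_le fun hQ => iSup_le fun hx => ?_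
    obtain ⟨ℓ, hside⟩ := hQ
    haveI := hμ
    set c := Q.corner with hc
    have h2l : (0:ℝ) < 2 ^ ℓ := zpow_pos (by norm_num) ℓ
    have h2l1 : (0:ℝ) < 2 ^ (ℓ+1) := zpow_pos (by norm_num) (ℓ+1)
    set B : Fin n → Set ℝ := fun i => {a | 0 < μ {y : Fin n → ℝ | y i = a}} with hB
    have hBc : ∀ i, (B i).Countable := fun i =>
      Measure.countable_meas_level_set_pos (measurable_pi_apply i)
    set D2 : Set ℝ := Set.range
      (fun q : (ℤ×ℤ)×(ℤ×ℤ) => (2:ℝ)^q.1.1 * q.1.2 + (2:ℝ)^q.2.1 * q.2.2) with hD2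
    have hD2c : D2.Countable := Set.countable_range _
    set bad : Fin n → Set ℝ := fun i => (fun p : ℝ × ℝ => p.1 - p.2) '' ((B i) ×ˢ D2) with hbad
    have hbadc : ∀ i, (bad i).Countable := fun i => ((hBc i).prod hD2c).image _
    have hchoice : ∀ i, ∃ sVal, sVal ∈ Set.Ioo (c i - 2^ℓ) (c i) ∧ sVal ∉ bad i := by
      intro i
      have hlt : c i - 2^ℓ < c i := by linarith
      have hunc : ¬ (Set.Ioo (c i - 2^ℓ) (c i)).Countable := by
        rw [← Cardinal.le_aleph0_iff_set_countable, Cardinal.mk_Ioo_real hlt]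
        exact Cardinal.aleph0_lt_continuum.not_ge
      have hns : ¬ (Set.Ioo (c i - 2^ℓ) (c i) ⊆ bad i) :=
        fun hsub => hunc ((hbadc i).mono hsub)
      obtain ⟨sVal, hs1, hs2⟩ := Set.not_subset.1 hns
      exact ⟨sVal, hs1, hs2⟩
    choose s hs1 hs2 using hchoice
    set t : Fin n → ℝ := fun i => s i - 2^(ℓ+1) * (⌊s i / 2^(ℓ+1)⌋ : ℝ) with ht
    have ht0 : ∀ i, 0 ≤ t i := by
      intro i
      have h1 := Int.floor_le (s i / 2^(ℓ+1))
      have h2 := mul_le_mul_of_nonneg_left h1 h2l1.le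
      have h3 : 2^(ℓ+1) * (s i / 2^(ℓ+1)) = s i := by field_simp
      simp only [ht]
      linarith
    have ht1 : ∀ i, t i < 2^(ℓ+1) := by
      intro i
      have h1 := Int.lt_floor_add_one (s i / 2^(ℓ+1))
      have h2 := mul_lt_mul_of_pos_left h1 h2l1
      have h3 : 2^(ℓ+1) * (s i / 2^(ℓ+1)) = s i := by field_simp
      simp only [ht]
      nlinarith
    set β : ℤ → Fin n → Bool := fun j i => decide (⌊t i * (2:ℝ)^j⌋ % 2 = 1) with hβ
    have hgs : ∀ (m : ℤ) (i : Fin n),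
        gridShift β m i = t i - 2^m * (⌊t i * (2:ℝ)^(-m)⌋ : ℝ) := by
      intro m i
      simp only [gridShift, hβ]
      exact (MaxAux.hasSum_digits (t i) m).tsum_eq
    have hnull : nullBoundaryGrid μ β := by
      rintro Q' ⟨m, k, hside', hcorner'⟩
      have hplane : ∀ (i : Fin n) (a : ℝ), a - s i ∈ D2 →
          μ {y : Fin n → ℝ | y i = a} = 0 := by
        intro i a haD
        by_contra hne
        have hpos : 0 < μ {y : Fin n → ℝ | y i = a} := pos_iff_ne_zero.2 hne
        exact hs2 i ⟨(a, a - s i), ⟨hpos, haD⟩, by dsimp only; ring⟩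
      have hface : ∀ i : Fin n,
          μ ({x : Fin n → ℝ | x i = Q'.corner i} ∪ {x | x i = Q'.corner i + Q'.side}) = 0 := by
        intro i
        have hc' : Q'.corner i = 2^m * (k i : ℝ) + (t i - 2^m * (⌊t i * (2:ℝ)^(-m)⌋ : ℝ)) := by
          rw [hcorner' i, hgs]
        have hd1 : Q'.corner i - s i ∈ D2 := by
          refine ⟨((m, k i - ⌊t i * (2:ℝ)^(-m)⌋), (ℓ+1, -⌊s i / 2^(ℓ+1)⌋)), ?_⟩
          dsimp only
          rw [hc']
          simp only [ht]
          push_cast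
          ring
        have hd2 : (Q'.corner i + Q'.side) - s i ∈ D2 := by
          refine ⟨((m, k i - ⌊t i * (2:ℝ)^(-m)⌋ + 1), (ℓ+1, -⌊s i / 2^(ℓ+1)⌋)), ?_⟩
          dsimp only
          rw [hc', hside']
          simp only [ht]
          push_cast
          ring
        exact measure_union_null (hplane i _ hd1) (hplane i _ hd2)
      exact measure_mono_null (MaxAux.cube_frontier_subset Q') (measure_iUnion_null hface)
    set R : Cube n := ⟨s, 2^(ℓ+1), h2l1⟩ with hR
    have hmemR : memGrid β R := by
      refine ⟨ℓ+1, fun i => ⌊s i / 2^(ℓ+1)⌋, rfl, fun i => ?_⟩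
      rw [hgs]
      have hfl : ⌊t i * (2:ℝ)^(-(ℓ+1))⌋ = 0 := by
        rw [Int.floor_eq_zero_iff]
        have hinv : (2:ℝ)^(-(ℓ+1)) = ((2:ℝ)^(ℓ+1))⁻¹ := zpow_neg 2 (ℓ+1)
        constructor
        · rw [hinv]
          exact mul_nonneg (ht0 i) (inv_pos.2 h2l1).le
        · rw [hinv]
          have := mul_lt_mul_of_pos_right (ht1 i) (inv_pos.2 h2l1)
          rwa [mul_inv_cancel₀ h2l1.ne'] at this
      rw [hfl]
      show s i = 2^(ℓ+1) * (⌊s i / 2^(ℓ+1)⌋ : ℝ) + (t i - 2^(ℓ+1) * ((0:ℤ) : ℝ))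
      simp only [ht]
      push_cast
      ring
    have hsub : Q.toSet ⊆ R.toSet := by
      intro y hy
      intro i
      obtain ⟨hy1, hy2⟩ := hy i
      obtain ⟨hsa, hsb⟩ := hs1 i
      have h2s : (2:ℝ)^(ℓ+1) = 2 * 2^ℓ := by
        rw [zpow_add₀ (by norm_num : (2:ℝ) ≠ 0), zpow_one]; ring
      rw [hside] at hy2
      constructor
      · exact le_trans hsb.le hy1
      · show y i < s i + (2:ℝ)^(ℓ+1)
        rw [h2s]
        have hcy : c i = Q.corner i := rfl
        rw [← hcy] at hy2
        linarith
    have hxR : x ∈ R.toSet := hsub hx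
    have hvQ : volume Q.toSet = ENNReal.ofReal (((2:ℝ)^ℓ)^n) := by
      rw [MaxAux.cube_volume, hside]
    have hvR : volume R.toSet = (2:ℝ≥0∞)^n * ENNReal.ofReal (((2:ℝ)^ℓ)^n) := by
      rw [MaxAux.cube_volume]
      show ENNReal.ofReal (((2:ℝ)^(ℓ+1))^n) = _
      have h2s : (2:ℝ)^(ℓ+1) = 2 * 2^ℓ := by
        rw [zpow_add₀ (by norm_num : (2:ℝ) ≠ 0), zpow_one]; ring
      rw [h2s, mul_pow, ENNReal.ofReal_mul (by positivity), ENNReal.ofReal_pow (by norm_num)]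
      norm_num
    have hkey : f R.toSet / volume R.toSet ≤ maximalNull μ f x :=
      le_iSup_of_le R (le_iSup_of_le ⟨β, hnull, hmemR⟩ (le_iSup_of_le hxR le_rfl))
    have h2n0 : ((2:ℝ≥0∞)^n) ≠ 0 := by positivity
    have h2nt : ((2:ℝ≥0∞)^n) ≠ ⊤ := by
      exact ENNReal.pow_ne_top (by norm_num)
    calc f Q.toSet / volume Q.toSet
        ≤ f R.toSet / volume Q.toSet := ENNReal.div_le_div_right (measure_mono hsub) _
      _ = (2:ℝ≥0∞)^n * f R.toSet / ((2:ℝ≥0∞)^n * volume Q.toSet) :=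
          (ENNReal.mul_div_mul_left _ _ h2n0 h2nt).symm
      _ = (2:ℝ≥0∞)^n * (f R.toSet / volume R.toSet) := by
          rw [hvR, hvQ, mul_div_assoc]
      _ ≤ (2:ℝ≥0∞)^(n+3) * (f R.toSet / volume R.toSet) := by
          gcongr
          · exact one_le_two
          · omega
      _ ≤ 2^(n+3) * maximalNull μ f x := mul_le_mul_right hkey _
end
end

section
/- Let σ and ω be locally finite positive Borel measures on ℝ^n with ω compactly supported and A₂(σ,ω) < ∞. Then for all 0 < ε, ε' < 1/4 the mollified pair has finite full testing constant: there exists a finite constant T (depending on σ, ω, ε, ε') such that ∫_Q M(1_Q σ_ε)² dω_{ε'} ≤ T² σ_ε(Q) for all cubes Q ∈ P^n, where σ_ε = σ ∗ φ_ε and ω_{ε'} = ω ∗ φ_{ε'}. -/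
open MeasureTheory Set Filter
open scoped ENNReal NNReal

noncomputable section

/-- `φ` is an admissible mollifier on `ℝⁿ`: smooth, `0 ≤ φ ≤ 1`, supported in `(−1,1)ⁿ`,
at least `2^{−n}` on `(−5/8,5/8)ⁿ`, with `∫ φ = 1`. -/
def IsAdmissibleMollifier {n : ℕ} (φ : (Fin n → ℝ) → ℝ) : Prop :=
  ContDiff ℝ (⊤ : ℕ∞) φ ∧
  (∀ x, φ x ∈ Set.Icc (0:ℝ) 1) ∧
  (∀ x, φ x ≠ 0 → ∀ i, |x i| < 1) ∧
  (∀ x : Fin n → ℝ, (∀ i, |x i| < 5/8) → (2:ℝ) ^ (-(n:ℤ)) ≤ φ x) ∧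
  (∫ x, φ x) = 1

/-- The mollification `ν_δ = ν ∗ φ_δ` of a measure `ν`, where `φ_δ(x) = δ^{−n} φ(x/δ)`:
the measure with density `x ↦ ∫ φ_δ(x−y) dν(y)` with respect to Lebesgue measure. -/
def mollify {n : ℕ} (φ : (Fin n → ℝ) → ℝ) (δ : ℝ) (ν : Measure (Fin n → ℝ)) :
    Measure (Fin n → ℝ) :=
  volume.withDensity fun x => ∫⁻ y, ENNReal.ofReal ((δ ^ n)⁻¹ * φ (δ⁻¹ • (x - y))) ∂ν

/-- The full testing constant `𝔗_M(σ,ω)`: the least `T` with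
`∫_Q M(1_Q σ)² dω ≤ T² σ(Q)` for all `Q ∈ 𝒫ⁿ`. -/
def fullTesting {n : ℕ} (σ ω : Measure (Fin n → ℝ)) : ℝ≥0∞ :=
  sInf {T : ℝ≥0∞ | ∀ Q : Cube n, Q.memP →
    ∫⁻ x in Q.toSet, (maximal (σ.restrict Q.toSet) x) ^ 2 ∂ω ≤ T ^ 2 * σ Q.toSet}

section Aux

open Metric

variable {n : ℕ}

namespace Cube

lemma toSet_eq_pi (Q : Cube n) :
    Q.toSet = Set.pi Set.univ (fun i => Set.Ico (Q.corner i) (Q.corner i + Q.side)) := by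
  ext x; simp [Cube.toSet, Set.mem_pi]

lemma measurableSet_toSet (Q : Cube n) : MeasurableSet Q.toSet := by
  rw [toSet_eq_pi]
  exact MeasurableSet.univ_pi fun i => measurableSet_Ico

lemma volume_toSet (Q : Cube n) : volume Q.toSet = ENNReal.ofReal (Q.side ^ n) := by
  rw [toSet_eq_pi, Real.volume_pi_Ico]
  simp only [add_sub_cancel_left]
  rw [Finset.prod_const, ← ENNReal.ofReal_pow Q.side_pos.le]
  simp

lemma volume_toSet_ne_zero (Q : Cube n) : volume Q.toSet ≠ 0 := by
  rw [volume_toSet]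
  simp only [ne_eq, ENNReal.ofReal_eq_zero, not_le]
  exact pow_pos Q.side_pos n

lemma volume_toSet_ne_top (Q : Cube n) : volume Q.toSet ≠ ⊤ := by
  rw [volume_toSet]; exact ENNReal.ofReal_ne_top

/-- center of a cube -/
def center (Q : Cube n) : Fin n → ℝ := fun i => Q.corner i + Q.side / 2

end Cube

lemma mem_closedBall_pi {x c : Fin n → ℝ} {r : ℝ} (hr : 0 ≤ r) :
    x ∈ Metric.closedBall c r ↔ ∀ i, |x i - c i| ≤ r := by
  rw [Metric.mem_closedBall, dist_pi_le_iff hr]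
  simp [Real.dist_eq]

lemma Cube.subset_closedBall_center (Q : Cube n) :
    Q.toSet ⊆ Metric.closedBall Q.center (Q.side / 2) := by
  intro x hx
  rw [mem_closedBall_pi (div_nonneg Q.side_pos.le (by norm_num))]
  intro i
  obtain ⟨h1, h2⟩ := hx i
  rw [abs_le, Cube.center]
  constructor <;> simp only [neg_le_sub_iff_le_add, tsub_le_iff_right] <;> nlinarith

lemma ennreal_le_rpow_half {a b : ℝ≥0∞} (h : a ^ 2 ≤ b) : a ≤ b ^ (1/2 : ℝ) := by
  have : a = (a ^ (2:ℕ)) ^ (1/2 : ℝ) := by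
    rw [← ENNReal.rpow_natCast a 2, ← ENNReal.rpow_mul]
    norm_num
  rw [this]
  exact ENNReal.rpow_le_rpow h (by norm_num)

lemma ennreal_rpow_half_sq (b : ℝ≥0∞) : (b ^ (1/2 : ℝ)) ^ 2 = b := by
  rw [← ENNReal.rpow_natCast (b ^ (1/2:ℝ)) 2, ← ENNReal.rpow_mul]
  norm_num

lemma ennreal_add_sq_le (a b : ℝ≥0∞) : (a + b) ^ 2 ≤ 4 * a ^ 2 + 4 * b ^ 2 := by
  rcases le_total a b with h | h
  · calc (a + b)^2 ≤ (b + b)^2 := by gcongr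
    _ = 4 * b^2 := by ring
    _ ≤ 4 * a^2 + 4 * b^2 := le_add_self
  · calc (a + b)^2 ≤ (a + a)^2 := by gcongr
    _ = 4 * a^2 := by ring
    _ ≤ 4 * a^2 + 4 * b^2 := le_self_add

/-- maximal function restricted to cubes of side at most `R'`. -/
def cubeMax (ν : Measure (Fin n → ℝ)) (R' : ℝ) (x : Fin n → ℝ) : ℝ≥0∞ :=
  ⨆ (Q : Cube n) (_ : Q.memP ∧ Q.side ≤ R' ∧ x ∈ Q.toSet), ν Q.toSet / volume Q.toSet

lemma cubeMax_le {ν : Measure (Fin n → ℝ)} {R' : ℝ} {B : ℝ≥0∞}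
    (hB : ∀ A : Set (Fin n → ℝ), MeasurableSet A → ν A ≤ B * volume A) (x : Fin n → ℝ) :
    cubeMax ν R' x ≤ B := by
  refine iSup_le fun Q => iSup_le fun _ => ?_
  exact ENNReal.div_le_of_le_mul (hB Q.toSet Q.measurableSet_toSet)

/-- Weak (1,1) bound for `cubeMax` via the Vitali covering lemma. -/
lemma cubeMax_weakType (ν : Measure (Fin n → ℝ)) {R' : ℝ} (hR' : 0 < R') (lam : ℝ≥0∞) :
    lam * volume {x | lam < cubeMax ν R' x} ≤ 5 ^ n * ν Set.univ := by
  classical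
  set S := {x | lam < cubeMax ν R' x} with hS
  have hex : ∀ p ∈ S, ∃ Q : Cube n, (Q.memP ∧ Q.side ≤ R' ∧ p ∈ Q.toSet) ∧
      lam * volume Q.toSet < ν Q.toSet := by
    intro p hp
    rw [hS, Set.mem_setOf_eq, cubeMax, lt_iSup_iff] at hp
    obtain ⟨Q, hQ⟩ := hp
    rw [lt_iSup_iff] at hQ
    obtain ⟨hc, hlt⟩ := hQ
    exact ⟨Q, hc, ENNReal.mul_lt_of_lt_div hlt⟩
  have hne : Nonempty (Cube n) := ⟨⟨fun _ => 0, 1, one_pos⟩⟩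
  choose! Qf hQf1 hQf2 using hex
  set c : (Fin n → ℝ) → (Fin n → ℝ) := fun p => (Qf p).center with hc
  set r : (Fin n → ℝ) → ℝ := fun p => (Qf p).side / 2 with hr
  obtain ⟨u, huS, hdisj, hcov⟩ :=
    Vitali.exists_disjoint_subfamily_covering_enlargement_closedBall S c r (R'/2)
      (fun p hp => by
        have := (hQf1 p hp).2.1
        simp only [hr]; linarith) 5 (by norm_num)
  have hmem : ∀ p ∈ S, p ∈ Metric.closedBall (c p) (r p) := fun p hp =>
    (Qf p).subset_closedBall_center ((hQf1 p hp).2.2)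
  have hucnt : u.Countable := by
    have : u.PairwiseDisjoint (fun p => Metric.closedBall (c p) (r p)) := hdisj
    refine this.countable_of_nonempty_interior fun p hp => ?_
    have hrp : 0 < r p := by
      have := (Qf p).side_pos; simp only [hr]; linarith
    exact ⟨c p, Metric.ball_subset_interior_closedBall (Metric.mem_ball_self hrp)⟩
  have hScov : S ⊆ ⋃ p ∈ u, Metric.closedBall (c p) (5 * r p) := by
    intro a ha
    obtain ⟨b, hb, hsub⟩ := hcov a ha
    exact Set.mem_biUnion hb (hsub (hmem a ha))
  have hvol5 : ∀ p ∈ S, volume (Metric.closedBall (c p) (5 * r p))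
      = 5 ^ n * volume (Qf p).toSet := by
    intro p hp
    have hrp : (0:ℝ) ≤ r p := by have := (Qf p).side_pos; simp only [hr]; linarith
    rw [Real.volume_pi_closedBall _ (by linarith), (Qf p).volume_toSet, Fintype.card_fin]
    rw [show (2 * (5 * r p)) = 5 * (Qf p).side by simp only [hr]; ring]
    rw [mul_pow, ENNReal.ofReal_mul (by positivity), ENNReal.ofReal_pow (by norm_num : (0:ℝ) ≤ 5)]
    norm_num
  have hvol1 : ∀ p ∈ S, volume (Metric.closedBall (c p) (r p)) = volume (Qf p).toSet := by
    intro p hp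
    have hrp : (0:ℝ) ≤ r p := by have := (Qf p).side_pos; simp only [hr]; linarith
    rw [Real.volume_pi_closedBall _ hrp, (Qf p).volume_toSet, Fintype.card_fin]
    rw [show (2 * r p) = (Qf p).side by simp only [hr]; ring]
  calc lam * volume S ≤ lam * volume (⋃ p ∈ u, Metric.closedBall (c p) (5 * r p)) :=
        mul_le_mul_right (measure_mono hScov) _
    _ ≤ lam * ∑' p : u, volume (Metric.closedBall (c p) (5 * r p)) :=
        mul_le_mul_right (measure_biUnion_le volume hucnt _) _
    _ = ∑' p : u, lam * volume (Metric.closedBall (c p) (5 * r p)) := ENNReal.tsum_mul_left.symm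
    _ ≤ ∑' p : u, 5 ^ n * ν (Metric.closedBall (c p) (r p)) := by
        refine ENNReal.tsum_le_tsum fun p => ?_
        have hpS : (p : Fin n → ℝ) ∈ S := huS p.2
        rw [hvol5 p hpS, ← mul_assoc, mul_comm lam, mul_assoc]
        refine mul_le_mul_right ?_ _
        calc lam * volume (Qf (p:Fin n → ℝ)).toSet ≤ ν (Qf (p:Fin n → ℝ)).toSet :=
              (hQf2 p hpS).le
          _ ≤ ν (Metric.closedBall (c p) (r p)) :=
              measure_mono ((Qf (p : Fin n → ℝ)).subset_closedBall_center)
    _ = 5 ^ n * ∑' p : u, ν (Metric.closedBall (c p) (r p)) := ENNReal.tsum_mul_left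
    _ = 5 ^ n * ν (⋃ p ∈ u, Metric.closedBall (c p) (r p)) := by
        rw [measure_biUnion hucnt hdisj fun p _ => Metric.isClosed_closedBall.measurableSet]
    _ ≤ 5 ^ n * ν Set.univ := mul_le_mul_right (measure_mono (Set.subset_univ _)) _

end Aux

section Aux2

open Metric

variable {n : ℕ}

lemma ennreal_div_two_pow_succ (B : ℝ≥0∞) (j : ℕ) : B / 2 ^ j = 2 * (B / 2 ^ (j + 1)) := by
  have h1 : B / 2 ^ (j + 1) = (B / 2 ^ j) / 2 := by
    rw [pow_succ, div_eq_mul_inv, div_eq_mul_inv, div_eq_mul_inv,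
      ENNReal.mul_inv (Or.inl (pow_ne_zero j two_ne_zero)) (Or.inr two_ne_zero), mul_assoc]
  rw [h1, ENNReal.mul_div_cancel two_ne_zero ENNReal.ofNat_ne_top]

/-- pointwise dyadic level-set bound for a function bounded by `B`. -/
lemma sq_le_tsum_levels {X : Type*} (f : X → ℝ≥0∞) (B : ℝ≥0∞) (hfB : ∀ x, f x ≤ B)
    (hB : B ≠ ⊤) (T : ℕ → Set X) (hT : ∀ j x, B / 2 ^ (j + 1) < f x → x ∈ T j) (x : X) :
    f x ^ 2 ≤ ∑' j : ℕ, (B / 2 ^ j) ^ 2 * (T j).indicator 1 x := by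
  rcases eq_or_ne (f x) 0 with h0 | h0
  · simp [h0]
  · have hfx_top : f x ≠ ⊤ := (lt_of_le_of_lt (hfB x) hB.lt_top).ne
    have hBne : B ≠ 0 := fun h => h0 (le_antisymm (h ▸ hfB x) (zero_le))
    have hexists : ∃ j : ℕ, B / 2 ^ (j + 1) < f x := by
      obtain ⟨k, hk⟩ := ENNReal.exists_nat_gt (ENNReal.div_lt_top hB h0).ne
      refine ⟨k, ?_⟩
      rw [ENNReal.div_lt_iff (Or.inl (by positivity)) (Or.inl (by simp [ENNReal.pow_ne_top]))]
      rw [ENNReal.div_lt_iff (Or.inl h0) (Or.inl hfx_top)] at hk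
      calc B < k * f x := hk
        _ ≤ 2 ^ (k + 1) * f x := by
            gcongr
            calc (k : ℝ≥0∞) ≤ 2 ^ k := by
                  exact_mod_cast Nat.cast_le.mpr (Nat.lt_two_pow_self (n := k)).le
            _ ≤ 2 ^ (k + 1) := by gcongr <;> norm_num
        _ = f x * 2 ^ (k + 1) := mul_comm _ _
    classical
    let j := Nat.find hexists
    have hj1 : B / 2 ^ (j + 1) < f x := Nat.find_spec hexists
    have hj2 : f x ≤ B / 2 ^ j := by
      rcases Nat.eq_zero_or_pos j with hj0 | hj0
      · rw [hj0]; simpa using hfB x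
      · obtain ⟨m, hm⟩ := Nat.exists_eq_succ_of_ne_zero hj0.ne'
        have := Nat.find_min hexists (m := m) (by omega)
        rw [hm]
        exact not_lt.mp this
    calc f x ^ 2 ≤ (B / 2 ^ j) ^ 2 * (T j).indicator 1 x := by
          rw [Set.indicator_of_mem (hT j x hj1)]
          simpa using pow_le_pow_left' hj2 2
      _ ≤ ∑' i : ℕ, (B / 2 ^ i) ^ 2 * (T i).indicator 1 x := ENNReal.le_tsum j

lemma tsum_levels_le (ν : Measure (Fin n → ℝ)) {R' : ℝ} (hR' : 0 < R') (B : ℝ≥0∞) :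
    ∑' j : ℕ, (B / 2 ^ j) ^ 2 * volume {x | B / 2 ^ (j + 1) < cubeMax ν R' x}
      ≤ 4 * B * (5 ^ n * ν Set.univ) := by
  have hterm : ∀ j : ℕ, (B / 2 ^ j) ^ 2 * volume {x | B / 2 ^ (j + 1) < cubeMax ν R' x}
      ≤ (2 * (B / 2 ^ j)) * (5 ^ n * ν Set.univ) := by
    intro j
    have hkey : (B / 2 ^ j) ^ 2 = (2 * (B / 2 ^ j)) * (B / 2 ^ (j + 1)) := by
      rw [ennreal_div_two_pow_succ B j]
      ring
    rw [hkey, mul_assoc]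
    exact mul_le_mul_right (cubeMax_weakType ν hR' _) _
  calc (∑' j : ℕ, (B / 2 ^ j) ^ 2 * volume {x | B / 2 ^ (j + 1) < cubeMax ν R' x})
      ≤ ∑' j : ℕ, (2 * (B / 2 ^ j)) * (5 ^ n * ν Set.univ) := ENNReal.tsum_le_tsum hterm
    _ = (∑' j : ℕ, 2 * (B / 2 ^ j)) * (5 ^ n * ν Set.univ) := ENNReal.tsum_mul_right
    _ = 4 * B * (5 ^ n * ν Set.univ) := by
        congr 1
        have : ∀ j : ℕ, 2 * (B / 2 ^ j) = (2 * B) * 2⁻¹ ^ j := by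
          intro j
          rw [div_eq_mul_inv, ENNReal.inv_pow, mul_assoc]
        simp_rw [this]
        rw [ENNReal.tsum_mul_left, ENNReal.tsum_geometric, ENNReal.one_sub_inv_two, inv_inv]
        ring

/-- any nonzero measure charges some dyadic cube -/
lemma exists_cube_pos (ν : Measure (Fin n → ℝ)) (hν : ν ≠ 0) :
    ∃ Q : Cube n, Q.memP ∧ 0 < ν Q.toSet := by
  by_contra hcon
  push_neg at hcon
  have hall : ∀ k : Fin n → ℤ, ν (Cube.toSet ⟨fun i => (k i : ℝ), 1, one_pos⟩) = 0 := by
    intro k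
    exact le_antisymm (hcon _ ⟨0, (zpow_zero 2).symm⟩) (zero_le)
  have hcover : (Set.univ : Set (Fin n → ℝ)) ⊆
      ⋃ k : Fin n → ℤ, Cube.toSet ⟨fun i => (k i : ℝ), 1, one_pos⟩ := by
    intro x _
    refine Set.mem_iUnion.mpr ⟨fun i => ⌊x i⌋, fun i => ⟨Int.floor_le _, ?_⟩⟩
    simpa using Int.lt_floor_add_one (x i)
  have : ν Set.univ = 0 := by
    refine le_antisymm ?_ (zero_le)
    calc ν Set.univ ≤ ν (⋃ k : Fin n → ℤ, Cube.toSet ⟨fun i => (k i : ℝ), 1, one_pos⟩) :=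
          measure_mono hcover
      _ ≤ ∑' k : Fin n → ℤ, ν (Cube.toSet ⟨fun i => (k i : ℝ), 1, one_pos⟩) :=
          measure_iUnion_le _
      _ = 0 := by simp [hall]
  exact hν (Measure.measure_univ_eq_zero.mp this)

end Aux2

section Aux3

open Metric

variable {n : ℕ} {φ : (Fin n → ℝ) → ℝ}

lemma mollifier_kernel_measurable (hφ : IsAdmissibleMollifier φ) (δ : ℝ) :
    Measurable (fun p : (Fin n → ℝ) × (Fin n → ℝ) =>
      ENNReal.ofReal ((δ ^ n)⁻¹ * φ (δ⁻¹ • (p.1 - p.2)))) := by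
  have hcont : Continuous fun p : (Fin n → ℝ) × (Fin n → ℝ) =>
      (δ ^ n)⁻¹ * φ (δ⁻¹ • (p.1 - p.2)) := by
    have : Continuous φ := (hφ.1).continuous
    fun_prop
  exact (ENNReal.continuous_ofReal.comp hcont).measurable

lemma mollifier_vanish (hφ : IsAdmissibleMollifier φ) {δ : ℝ} (hδ : 0 < δ)
    {x y : Fin n → ℝ} (h : ∃ i, δ ≤ |x i - y i|) : φ (δ⁻¹ • (x - y)) = 0 := by
  by_contra hne
  obtain ⟨i, hi⟩ := h
  have := hφ.2.2.1 _ hne i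
  simp only [Pi.smul_apply, Pi.sub_apply, smul_eq_mul, abs_mul, abs_inv,
    abs_of_pos hδ] at this
  rw [inv_mul_lt_iff₀ hδ, mul_one] at this
  exact absurd this (not_lt.mpr hi)

/-- The mollification of `ν` gives mass at most `2^n ν(E)` to `A`, whenever `E` contains the
`δ`-thickening of `A`. -/
lemma mollify_apply_le (hφ : IsAdmissibleMollifier φ) {δ : ℝ} (hδ : 0 < δ)
    (ν : Measure (Fin n → ℝ)) [SigmaFinite ν] {A E : Set (Fin n → ℝ)}
    (hA : MeasurableSet A) (hE : MeasurableSet E)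
    (hAE : ∀ x ∈ A, ∀ y : Fin n → ℝ, (∀ i, |x i - y i| < δ) → y ∈ E) :
    mollify φ δ ν A ≤ 2 ^ n * ν E := by
  have hδn : (0:ℝ) < δ ^ n := pow_pos hδ n
  rw [mollify, withDensity_apply _ hA]
  have hswap : ∫⁻ x in A, ∫⁻ y, ENNReal.ofReal ((δ ^ n)⁻¹ * φ (δ⁻¹ • (x - y))) ∂ν ∂volume
      = ∫⁻ y, ∫⁻ x in A, ENNReal.ofReal ((δ ^ n)⁻¹ * φ (δ⁻¹ • (x - y))) ∂volume ∂ν :=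
    lintegral_lintegral_swap ((mollifier_kernel_measurable hφ δ).aemeasurable)
  rw [hswap]
  have hinner : ∀ y : Fin n → ℝ, (∫⁻ x in A, ENNReal.ofReal ((δ ^ n)⁻¹ * φ (δ⁻¹ • (x - y))) ∂volume)
      ≤ E.indicator (fun _ => (2:ℝ≥0∞) ^ n) y := by
    intro y
    by_cases hy : y ∈ E
    · rw [Set.indicator_of_mem hy]
      have hpt : ∀ x : Fin n → ℝ, ENNReal.ofReal ((δ ^ n)⁻¹ * φ (δ⁻¹ • (x - y)))
          ≤ (Metric.closedBall y δ).indicator (fun _ => ENNReal.ofReal ((δ ^ n)⁻¹)) x := by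
        intro x
        by_cases hx : x ∈ Metric.closedBall y δ
        · rw [Set.indicator_of_mem hx]
          apply ENNReal.ofReal_le_ofReal
          calc (δ ^ n)⁻¹ * φ (δ⁻¹ • (x - y)) ≤ (δ ^ n)⁻¹ * 1 := by
                have := (hφ.2.1 (δ⁻¹ • (x - y))).2
                gcongr
            _ = (δ ^ n)⁻¹ := mul_one _
        · rw [Set.indicator_of_notMem hx]
          have : ∃ i, δ ≤ |x i - y i| := by
            by_contra hcon
            push_neg at hcon
            exact hx ((mem_closedBall_pi hδ.le).mpr fun i => (hcon i).le)
          rw [mollifier_vanish hφ hδ this, mul_zero, ENNReal.ofReal_zero]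
      calc (∫⁻ x in A, ENNReal.ofReal ((δ ^ n)⁻¹ * φ (δ⁻¹ • (x - y))) ∂volume)
          ≤ ∫⁻ x in A, (Metric.closedBall y δ).indicator (fun _ => ENNReal.ofReal ((δ ^ n)⁻¹)) x ∂volume :=
            lintegral_mono fun x => hpt x
        _ ≤ ∫⁻ x, (Metric.closedBall y δ).indicator (fun _ => ENNReal.ofReal ((δ ^ n)⁻¹)) x ∂volume :=
            lintegral_mono' Measure.restrict_le_self le_rfl
        _ = ENNReal.ofReal ((δ ^ n)⁻¹) * volume (Metric.closedBall y δ) := by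
            rw [lintegral_indicator Metric.isClosed_closedBall.measurableSet]
            simp
        _ = (2:ℝ≥0∞) ^ n := by
            rw [Real.volume_pi_closedBall _ hδ.le, Fintype.card_fin,
              ← ENNReal.ofReal_mul (by positivity)]
            rw [show (δ ^ n)⁻¹ * (2 * δ) ^ n = 2 ^ n by
              rw [mul_pow]; field_simp]
            rw [ENNReal.ofReal_pow (by norm_num)]
            norm_num
    · rw [Set.indicator_of_notMem hy]
      have hzero : ∀ x ∈ A, ENNReal.ofReal ((δ ^ n)⁻¹ * φ (δ⁻¹ • (x - y))) = 0 := by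
        intro x hx
        have : φ (δ⁻¹ • (x - y)) = 0 := by
          apply mollifier_vanish hφ hδ
          by_contra hcon
          push_neg at hcon
          exact hy (hAE x hx y hcon)
        rw [this, mul_zero, ENNReal.ofReal_zero]
      calc (∫⁻ x in A, ENNReal.ofReal ((δ ^ n)⁻¹ * φ (δ⁻¹ • (x - y))) ∂volume)
          = ∫⁻ x in A, A.indicator (fun _ => (0:ℝ≥0∞)) x ∂volume := by
            rw [setLIntegral_congr_fun_ae hA]
            exact Filter.Eventually.of_forall fun x hx => by
              rw [hzero x hx, Set.indicator_of_mem hx]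
        _ = 0 := by
            rw [setLIntegral_congr_fun_ae hA (Filter.Eventually.of_forall fun x hx =>
              Set.indicator_of_mem hx _)]
            simp
        _ ≤ 0 := le_rfl
  calc (∫⁻ y, ∫⁻ x in A, ENNReal.ofReal ((δ ^ n)⁻¹ * φ (δ⁻¹ • (x - y))) ∂volume ∂ν)
      ≤ ∫⁻ y, E.indicator (fun _ => (2:ℝ≥0∞) ^ n) y ∂ν := lintegral_mono hinner
    _ = 2 ^ n * ν E := by rw [lintegral_indicator hE]; simp
    _ ≤ 2 ^ n * ν E := le_rfl

/-- pointwise bound for the mollified density. -/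
lemma mollify_density_le (hφ : IsAdmissibleMollifier φ) {δ : ℝ} (hδ : 0 < δ) (hδ1 : δ ≤ 1)
    (ν : Measure (Fin n → ℝ)) (x : Fin n → ℝ) :
    (∫⁻ y, ENNReal.ofReal ((δ ^ n)⁻¹ * φ (δ⁻¹ • (x - y))) ∂ν)
      ≤ ENNReal.ofReal ((δ ^ n)⁻¹) * ν (Metric.closedBall x 1) := by
  have hpt : ∀ y, ENNReal.ofReal ((δ ^ n)⁻¹ * φ (δ⁻¹ • (x - y)))
      ≤ (Metric.closedBall x 1).indicator (fun _ => ENNReal.ofReal ((δ ^ n)⁻¹)) y := by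
    intro y
    by_cases hy : y ∈ Metric.closedBall x 1
    · rw [Set.indicator_of_mem hy]
      apply ENNReal.ofReal_le_ofReal
      have h1 := (hφ.2.1 (δ⁻¹ • (x - y))).2
      have h0 : (0:ℝ) < (δ ^ n)⁻¹ := by positivity
      nlinarith
    · rw [Set.indicator_of_notMem hy]
      have : ∃ i, δ ≤ |x i - y i| := by
        by_contra hcon
        push_neg at hcon
        refine hy ?_
        rw [mem_closedBall_pi (by norm_num)]
        intro i
        rw [abs_sub_comm]
        exact (hcon i).le.trans hδ1
      rw [mollifier_vanish hφ hδ this, mul_zero, ENNReal.ofReal_zero]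
  calc (∫⁻ y, ENNReal.ofReal ((δ ^ n)⁻¹ * φ (δ⁻¹ • (x - y))) ∂ν)
      ≤ ∫⁻ y, (Metric.closedBall x 1).indicator (fun _ => ENNReal.ofReal ((δ ^ n)⁻¹)) y ∂ν :=
        lintegral_mono hpt
    _ = ENNReal.ofReal ((δ ^ n)⁻¹) * ν (Metric.closedBall x 1) := by
        rw [lintegral_indicator Metric.isClosed_closedBall.measurableSet]
        simp

end Aux3


/-- **Mollified weights have finite full testing constant.** If `σ, ω` are locally finite
positive Borel measures on `ℝⁿ` with `ω` compactly supported and `A₂(σ,ω) < ∞`, then for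
all `0 < ε, ε' < 1/4` the mollified pair `(σ_ε, ω_{ε'})` has finite full testing
constant. -/
theorem mollified_fullTesting_finite
    {n : ℕ} (φ : (Fin n → ℝ) → ℝ) (hφ : IsAdmissibleMollifier φ)
    (σ ω : Measure (Fin n → ℝ))
    (hσ : IsLocallyFiniteMeasure σ) (hω : IsLocallyFiniteMeasure ω)
    (hωc : ∃ K : Set (Fin n → ℝ), IsCompact K ∧ ω Kᶜ = 0)
    (hA2 : A2 σ ω ≠ ⊤)
    (ε ε' : ℝ) (hε : 0 < ε) (hε' : 0 < ε') (hε4 : ε < 1/4) (hε'4 : ε' < 1/4) :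
    fullTesting (mollify φ ε σ) (mollify φ ε' ω) < ⊤ := by
  classical
  by_cases hω0 : ω = 0
  · have hW0 : mollify φ ε' ω = 0 := by
      rw [hω0, mollify]
      have hz : (fun x => ∫⁻ y, ENNReal.ofReal ((ε' ^ n)⁻¹ * φ (ε'⁻¹ • (x - y)))
          ∂(0 : Measure (Fin n → ℝ))) = fun _ => 0 := by
        funext x; simp
      rw [hz]
      exact withDensity_zero
    refine lt_of_le_of_lt (sInf_le ?_) (by norm_num : (0:ℝ≥0∞) < ⊤)
    intro Q hQ
    rw [hW0]
    simp
  obtain ⟨K, hK, hKc⟩ := hωc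
  have hωuniv : ω Set.univ < ⊤ := by
    calc ω Set.univ = ω (K ∪ Kᶜ) := by rw [Set.union_compl_self]
      _ ≤ ω K + ω Kᶜ := measure_union_le _ _
      _ = ω K := by rw [hKc, add_zero]
      _ < ⊤ := hK.measure_lt_top
  obtain ⟨Q₀, hQ₀P, hQ₀pos⟩ := exists_cube_pos ω hω0
  have hQ₀top : ω Q₀.toSet ≠ ⊤ := ((measure_mono (Set.subset_univ _)).trans_lt hωuniv).ne
  set K' : Set (Fin n → ℝ) := Metric.cthickening 1 K with hK'def
  have hK'closed : IsClosed K' := Metric.isClosed_cthickening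
  obtain ⟨R₁, hR₁⟩ := (hK.isBounded.cthickening (δ := 1)).subset_closedBall 0
  obtain ⟨R₂, hR₂⟩ :=
    (Metric.isBounded_closedBall.subset Q₀.subset_closedBall_center).subset_closedBall 0
  obtain ⟨rR, hrR⟩ := pow_unbounded_of_one_lt (max (max R₁ R₂) 1) (by norm_num : (1:ℝ) < 2)
  set R : ℝ := 2 ^ rR with hRdef
  have hR1 : 1 ≤ R := le_of_lt (lt_of_le_of_lt (le_max_right _ 1) hrR)
  have hR0 : (0:ℝ) ≤ R := by linarith
  have hK'R : K' ⊆ Metric.closedBall 0 R :=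
    hR₁.trans (Metric.closedBall_subset_closedBall
      (le_of_lt (lt_of_le_of_lt ((le_max_left R₁ R₂).trans (le_max_left _ 1)) hrR)))
  have hQ₀R : Q₀.toSet ⊆ Metric.closedBall 0 R :=
    hR₂.trans (Metric.closedBall_subset_closedBall
      (le_of_lt (lt_of_le_of_lt ((le_max_right R₁ R₂).trans (le_max_left _ 1)) hrR)))
  set K₂ : Set (Fin n → ℝ) := Metric.closedBall 0 (3*R) with hK₂def
  set B : ℝ≥0∞ := ENNReal.ofReal ((ε ^ n)⁻¹) * σ (Metric.closedBall 0 (3*R+1)) with hBdef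
  have hBtop : B ≠ ⊤ :=
    ENNReal.mul_ne_top ENNReal.ofReal_ne_top (isCompact_closedBall _ _).measure_lt_top.ne
  have hg_le : ∀ x ∈ K₂, (∫⁻ y, ENNReal.ofReal ((ε ^ n)⁻¹ * φ (ε⁻¹ • (x - y))) ∂σ) ≤ B := by
    intro x hx
    refine (mollify_density_le hφ hε (by linarith) σ x).trans (mul_le_mul_right ?_ _)
    refine measure_mono (Metric.closedBall_subset_closedBall' ?_)
    have : dist x (0 : Fin n → ℝ) ≤ 3*R := hx
    linarith
  set D : ℝ≥0∞ := ENNReal.ofReal ((ε' ^ n)⁻¹) * ω Set.univ with hDdef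
  have hDtop : D ≠ ⊤ := ENNReal.mul_ne_top ENNReal.ofReal_ne_top hωuniv.ne
  set hd : (Fin n → ℝ) → ℝ≥0∞ :=
    fun x => ∫⁻ y, ENNReal.ofReal ((ε' ^ n)⁻¹ * φ (ε'⁻¹ • (x - y))) ∂ω with hhdef
  have hWW : mollify φ ε' ω = volume.withDensity hd := rfl
  have hh_le : ∀ x, hd x ≤ D := by
    intro x
    refine (mollify_density_le hφ hε' (by linarith) ω x).trans (mul_le_mul_right ?_ _)
    exact measure_mono (Set.subset_univ _)
  have hh_zero : ∀ x ∉ K', hd x = 0 := by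
    intro x hx
    have hae : ∀ᵐ y ∂ω, y ∈ K := by
      rw [MeasureTheory.ae_iff]
      simpa [Set.compl_def] using hKc
    have hz : ∀ᵐ y ∂ω, ENNReal.ofReal ((ε' ^ n)⁻¹ * φ (ε'⁻¹ • (x - y))) = 0 := by
      filter_upwards [hae] with y hy
      have hv : φ (ε'⁻¹ • (x - y)) = 0 := by
        apply mollifier_vanish hφ hε'
        by_contra hcon
        push_neg at hcon
        have hdist : dist x y ≤ 1 := by
          refine (dist_pi_le_iff (by norm_num)).mpr fun i => ?_
          rw [Real.dist_eq]
          have := (hcon i).le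
          linarith
        exact hx (Metric.mem_cthickening_of_dist_le x y 1 K hy hdist)
      rw [hv, mul_zero, ENNReal.ofReal_zero]
    rw [hhdef]
    calc (∫⁻ y, ENNReal.ofReal ((ε' ^ n)⁻¹ * φ (ε'⁻¹ • (x - y))) ∂ω)
        = ∫⁻ _, (0:ℝ≥0∞) ∂ω := lintegral_congr_ae hz
      _ = 0 := lintegral_zero
  have hWK'c : mollify φ ε' ω K'ᶜ = 0 := by
    rw [hWW, withDensity_apply _ hK'closed.measurableSet.compl]
    calc (∫⁻ x in K'ᶜ, hd x ∂volume) = ∫⁻ _ in K'ᶜ, (0:ℝ≥0∞) ∂volume :=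
          setLIntegral_congr_fun_ae hK'closed.measurableSet.compl
            (Filter.Eventually.of_forall fun x hx => hh_zero x hx)
      _ = 0 := lintegral_zero
  have hWuniv_le : mollify φ ε' ω Set.univ ≤ D * volume (Metric.closedBall (0:Fin n→ℝ) R) := by
    rw [hWW, withDensity_apply _ MeasurableSet.univ, Measure.restrict_univ]
    calc (∫⁻ x, hd x ∂volume) ≤ ∫⁻ x, (K'.indicator (fun _ => D)) x ∂volume := by
          refine lintegral_mono fun x => ?_
          by_cases hx : x ∈ K'
          · rw [Set.indicator_of_mem hx]; exact hh_le x
          · rw [Set.indicator_of_notMem hx, hh_zero x hx]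
      _ = D * volume K' := by rw [lintegral_indicator hK'closed.measurableSet]; simp
      _ ≤ D * volume (Metric.closedBall 0 R) := mul_le_mul_right (measure_mono hK'R) _
  have hWuniv_top : mollify φ ε' ω Set.univ ≠ ⊤ := by
    refine ne_top_of_le_ne_top ?_ hWuniv_le
    exact ENNReal.mul_ne_top hDtop (isCompact_closedBall _ _).measure_lt_top.ne
  have hW_meas_le : ∀ T : Set (Fin n → ℝ), MeasurableSet T →
      mollify φ ε' ω T ≤ D * volume T := by
    intro T hT
    rw [hWW, withDensity_apply _ hT]
    calc (∫⁻ x in T, hd x ∂volume) ≤ ∫⁻ _ in T, D ∂volume := lintegral_mono fun x => hh_le x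
      _ = D * volume T := setLIntegral_const T D
  set Astar : ℝ≥0∞ := ((2:ℝ≥0∞) ^ n * 4 ^ (2 * n) * A2 σ ω) / ω Q₀.toSet with hAstardef
  have hAstar_top : Astar ≠ ⊤ := by
    rw [hAstardef]
    refine (ENNReal.div_lt_top ?_ hQ₀pos.ne').ne
    exact ENNReal.mul_ne_top (ENNReal.mul_ne_top (ENNReal.pow_ne_top ENNReal.ofNat_ne_top)
      (ENNReal.pow_ne_top (by norm_num))) hA2
  set CT : ℝ≥0∞ := 16 * 5 ^ n * B * D + 4 * (Astar * mollify φ ε' ω Set.univ) with hCTdef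
  have hCTtop : CT ≠ ⊤ := by
    rw [hCTdef]
    refine ENNReal.add_ne_top.mpr ⟨?_, ?_⟩
    · exact ENNReal.mul_ne_top (ENNReal.mul_ne_top (ENNReal.mul_ne_top (by norm_num)
        (ENNReal.pow_ne_top (by norm_num))) hBtop) hDtop
    · exact ENNReal.mul_ne_top (by norm_num) (ENNReal.mul_ne_top hAstar_top hWuniv_top)
  refine lt_of_le_of_lt (sInf_le ?_) (ENNReal.rpow_lt_top_of_nonneg (by norm_num) hCTtop :
    CT ^ (1/2:ℝ) < ⊤)
  intro Q hQP
  rw [ennreal_rpow_half_sq]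
  -- core estimate for a fixed cube Q
  set s : ℝ≥0∞ := mollify φ ε σ Q.toSet with hsdef
  set μt : Measure (Fin n → ℝ) := (mollify φ ε σ).restrict (Q.toSet ∩ K₂) with hμtdef
  set Ms : (Fin n → ℝ) → ℝ≥0∞ := cubeMax μt (2*R) with hMsdef
  set M : (Fin n → ℝ) → ℝ≥0∞ := maximal ((mollify φ ε σ).restrict Q.toSet) with hMdef
  have hμt_le : ∀ A : Set (Fin n → ℝ), MeasurableSet A → μt A ≤ B * volume A := by
    intro A hA
    have hmeasQK : MeasurableSet (Q.toSet ∩ K₂) :=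
      Q.measurableSet_toSet.inter Metric.isClosed_closedBall.measurableSet
    rw [hμtdef, Measure.restrict_apply hA, mollify, withDensity_apply _ (hA.inter hmeasQK)]
    calc (∫⁻ x in A ∩ (Q.toSet ∩ K₂), ∫⁻ y, ENNReal.ofReal ((ε ^ n)⁻¹ * φ (ε⁻¹ • (x - y))) ∂σ
            ∂volume)
        ≤ ∫⁻ _ in A ∩ (Q.toSet ∩ K₂), B ∂volume := by
          refine setLIntegral_mono' (hA.inter hmeasQK) fun x hx => ?_
          exact hg_le x hx.2.2
      _ = B * volume (A ∩ (Q.toSet ∩ K₂)) := setLIntegral_const _ _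
      _ ≤ B * volume A := mul_le_mul_right (measure_mono Set.inter_subset_left) _
  have hMsB : ∀ x, Ms x ≤ B := cubeMax_le hμt_le
  have hμt_univ : μt Set.univ ≤ s := by
    rw [hμtdef, Measure.restrict_apply MeasurableSet.univ, Set.univ_inter, hsdef]
    exact measure_mono Set.inter_subset_left
  -- bound for big cubes
  have hbig : ∀ x ∈ Metric.closedBall (0:Fin n → ℝ) R, ∀ Q' : Cube n, Q'.memP →
      2*R ≤ Q'.side → x ∈ Q'.toSet →
      (mollify φ ε σ).restrict Q.toSet Q'.toSet / volume Q'.toSet ≤ (s * Astar) ^ (1/2:ℝ) := by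
    intro x hx Q' hQ'P hside hxQ'
    obtain ⟨ℓ, hℓ⟩ := hQ'P
    apply ennreal_le_rpow_half
    have hsidepos := Q'.side_pos
    set V : ℝ≥0∞ := volume Q'.toSet with hVdef
    set Qb : Cube n := ⟨fun i => Q'.corner i - Q'.side, 4 * Q'.side, by linarith⟩ with hQbdef
    have hQbP : Qb.memP := by
      refine ⟨ℓ + 2, ?_⟩
      show (4 : ℝ) * Q'.side = 2 ^ (ℓ+2)
      rw [hℓ, zpow_add₀ (by norm_num : (2:ℝ) ≠ 0)]
      norm_num
      ring
    have hRx : ∀ i, |x i| ≤ R := by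
      intro i
      simpa using (mem_closedBall_pi hR0).mp hx i
    have hball_sub : Metric.closedBall (0:Fin n → ℝ) R ⊆ Qb.toSet := by
      intro y hy
      intro i
      have hyi : |y i| ≤ R := by simpa using (mem_closedBall_pi hR0).mp hy i
      have hxi := hxQ' i
      have h1 := abs_le.mp (hRx i)
      have h2 := abs_le.mp hyi
      constructor
      · show Q'.corner i - Q'.side ≤ y i
        linarith [hxi.1]
      · show y i < Q'.corner i - Q'.side + 4 * Q'.side
        linarith [hxi.2, hxi.1]
    have hthick : ∀ z ∈ Q'.toSet, ∀ y : Fin n → ℝ, (∀ i, |z i - y i| < ε) → y ∈ Qb.toSet := by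
      intro z hz y hzy i
      obtain ⟨hz1, hz2⟩ := hz i
      have h3 := abs_lt.mp (hzy i)
      have hεside : ε ≤ Q'.side := by linarith
      constructor
      · show Q'.corner i - Q'.side ≤ y i
        linarith
      · show y i < Q'.corner i - Q'.side + 4 * Q'.side
        linarith
    have hnum1 : (mollify φ ε σ).restrict Q.toSet Q'.toSet ≤ s := by
      rw [Measure.restrict_apply Q'.measurableSet_toSet, hsdef]
      exact measure_mono Set.inter_subset_right
    have hnum2 : (mollify φ ε σ).restrict Q.toSet Q'.toSet ≤ mollify φ ε σ Q'.toSet := by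
      rw [Measure.restrict_apply Q'.measurableSet_toSet]
      exact measure_mono Set.inter_subset_left
    have hSQ' : mollify φ ε σ Q'.toSet ≤ 2^n * σ Qb.toSet :=
      mollify_apply_le hφ hε σ Q'.measurableSet_toSet Qb.measurableSet_toSet hthick
    have hV0 : V ≠ 0 := Q'.volume_toSet_ne_zero
    have hVtop : V ≠ ⊤ := Q'.volume_toSet_ne_top
    have hVQb : volume Qb.toSet = 4^n * V := by
      rw [Qb.volume_toSet, hVdef, Q'.volume_toSet]
      show ENNReal.ofReal ((4 * Q'.side) ^ n) = 4 ^ n * ENNReal.ofReal (Q'.side ^ n)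
      rw [mul_pow, ENNReal.ofReal_mul (by positivity),
        ENNReal.ofReal_pow (by norm_num : (0:ℝ) ≤ 4)]
      norm_num
    have hA2Qb : σ Qb.toSet * ω Qb.toSet ≤ A2 σ ω * volume Qb.toSet * volume Qb.toSet := by
      have hle := le_iSup₂ (f := fun (Qc : Cube n) (_ : Qc.memP) =>
        (σ Qc.toSet / volume Qc.toSet) * (ω Qc.toSet / volume Qc.toSet)) Qb hQbP
      calc σ Qb.toSet * ω Qb.toSet
          = ((σ Qb.toSet / volume Qb.toSet) * volume Qb.toSet) *
            ((ω Qb.toSet / volume Qb.toSet) * volume Qb.toSet) := by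
            rw [ENNReal.div_mul_cancel Qb.volume_toSet_ne_zero Qb.volume_toSet_ne_top,
              ENNReal.div_mul_cancel Qb.volume_toSet_ne_zero Qb.volume_toSet_ne_top]
        _ = ((σ Qb.toSet / volume Qb.toSet) * (ω Qb.toSet / volume Qb.toSet)) *
            volume Qb.toSet * volume Qb.toSet := by ring
        _ ≤ A2 σ ω * volume Qb.toSet * volume Qb.toSet := by
            gcongr
            exact hle
    have hσQb : σ Qb.toSet ≤ A2 σ ω * volume Qb.toSet * volume Qb.toSet / ω Q₀.toSet := by
      rw [ENNReal.le_div_iff_mul_le (Or.inl hQ₀pos.ne') (Or.inl hQ₀top)]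
      calc σ Qb.toSet * ω Q₀.toSet ≤ σ Qb.toSet * ω Qb.toSet := by
            gcongr
            exact hQ₀R.trans hball_sub
        _ ≤ _ := hA2Qb
    have hkey : mollify φ ε σ Q'.toSet ≤ (Astar * V) * V := by
      calc mollify φ ε σ Q'.toSet ≤ 2^n * σ Qb.toSet := hSQ'
        _ ≤ 2^n * (A2 σ ω * (4^n * V) * (4^n * V) / ω Q₀.toSet) := by
            rw [← hVQb]
            gcongr
        _ = (Astar * V) * V := by
            rw [hAstardef]
            simp only [div_eq_mul_inv]
            ring
    rw [sq]
    calc ((mollify φ ε σ).restrict Q.toSet Q'.toSet / V) *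
          ((mollify φ ε σ).restrict Q.toSet Q'.toSet / V)
        ≤ (s / V) * ((Astar * V * V) / V) := by
          gcongr
          exact hnum2.trans hkey
      _ = (s / V) * (Astar * V) := by
          congr 1
          rw [mul_div_assoc, ENNReal.div_self hV0 hVtop, mul_one]
      _ = Astar * ((s / V) * V) := by ring
      _ = Astar * s := by rw [ENNReal.div_mul_cancel hV0 hVtop]
      _ = s * Astar := mul_comm _ _
  -- pointwise bound
  have hpt : ∀ x ∈ K', M x ≤ Ms x + (s * Astar) ^ (1/2:ℝ) := by
    intro x hxK'
    have hx : x ∈ Metric.closedBall (0:Fin n → ℝ) R := hK'R hxK'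
    rw [hMdef, maximal]
    refine iSup_le fun Q' => iSup_le fun hQ'P => iSup_le fun hxQ' => ?_
    rcases le_total Q'.side (2*R) with hsmall | hbigside
    · have hsub : Q'.toSet ⊆ K₂ := by
        intro z hz
        rw [hK₂def, mem_closedBall_pi (by linarith)]
        intro i
        have h1 := hz i
        have h2 := hxQ' i
        have hxi : |x i| ≤ R := by simpa using (mem_closedBall_pi hR0).mp hx i
        have h3 := abs_le.mp hxi
        simp only [Pi.zero_apply, sub_zero]
        rw [abs_le]
        constructor <;> linarith [h1.1, h1.2, h2.1, h2.2]
      have hEq : (mollify φ ε σ).restrict Q.toSet Q'.toSet = μt Q'.toSet := by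
        rw [Measure.restrict_apply Q'.measurableSet_toSet, hμtdef,
          Measure.restrict_apply Q'.measurableSet_toSet]
        congr 1
        rw [← Set.inter_assoc]
        exact (Set.inter_eq_left.mpr (Set.inter_subset_left.trans hsub)).symm
      rw [hEq]
      refine le_trans ?_ le_self_add
      rw [hMsdef, cubeMax]
      exact le_iSup₂ (f := fun (Q'' : Cube n)
        (_ : Q''.memP ∧ Q''.side ≤ 2*R ∧ x ∈ Q''.toSet) =>
        μt Q''.toSet / volume Q''.toSet) Q' ⟨hQ'P, hsmall, hxQ'⟩
    · exact le_trans (hbig x hx Q' hQ'P hbigside hxQ') le_add_self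
  -- level sets
  set Tj : ℕ → Set (Fin n → ℝ) :=
    fun j => toMeasurable volume {p | B / 2^(j+1) < Ms p} with hTjdef
  have hTjmeas : ∀ j, MeasurableSet (Tj j) := fun j => measurableSet_toMeasurable _ _
  have hMs_sq : ∀ x, Ms x ^ 2 ≤ ∑' j : ℕ, (B/2^j)^2 * (Tj j).indicator 1 x :=
    sq_le_tsum_levels Ms B hMsB hBtop Tj (fun j x hx => subset_toMeasurable _ _ hx)
  set F : (Fin n → ℝ) → ℝ≥0∞ :=
    fun x => 4 * (∑' j : ℕ, (B/2^j)^2 * (Tj j).indicator 1 x) + 4 * (s * Astar) with hFdef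
  have hindF : ∀ x, K'.indicator (fun y => M y ^ 2) x ≤ F x := by
    intro x
    by_cases hx : x ∈ K'
    · rw [Set.indicator_of_mem hx]
      calc M x ^ 2 ≤ (Ms x + (s*Astar)^(1/2:ℝ)) ^ 2 := by
            gcongr
            exact hpt x hx
        _ ≤ 4 * Ms x ^2 + 4 * ((s*Astar)^(1/2:ℝ))^2 := ennreal_add_sq_le _ _
        _ = 4 * Ms x ^2 + 4 * (s * Astar) := by rw [ennreal_rpow_half_sq]
        _ ≤ F x := by
            show _ ≤ 4 * (∑' j : ℕ, (B/2^j)^2 * (Tj j).indicator 1 x) + 4 * (s * Astar)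
            gcongr
            exact hMs_sq x
    · rw [Set.indicator_of_notMem hx]
      exact zero_le
  have hcongr : (∫⁻ x in Q.toSet, M x ^ 2 ∂(mollify φ ε' ω))
      = ∫⁻ x in Q.toSet, K'.indicator (fun y => M y ^2) x ∂(mollify φ ε' ω) := by
    apply lintegral_congr_ae
    have hnull : ((mollify φ ε' ω).restrict Q.toSet) K'ᶜ = 0 := by
      rw [Measure.restrict_apply hK'closed.measurableSet.compl]
      exact le_antisymm ((measure_mono Set.inter_subset_left).trans hWK'c.le) (zero_le)
    rw [Filter.EventuallyEq, ae_iff]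
    refine measure_mono_null (fun x hx => ?_) hnull
    simp only [Set.mem_setOf_eq] at hx
    rw [Set.mem_compl_iff]
    intro hc
    exact hx (Set.indicator_of_mem hc fun y => M y ^ 2).symm
  calc (∫⁻ x in Q.toSet, M x ^ 2 ∂(mollify φ ε' ω))
      = ∫⁻ x in Q.toSet, K'.indicator (fun y => M y ^2) x ∂(mollify φ ε' ω) := hcongr
    _ ≤ ∫⁻ x, K'.indicator (fun y => M y ^2) x ∂(mollify φ ε' ω) :=
        lintegral_mono' Measure.restrict_le_self le_rfl
    _ ≤ ∫⁻ x, F x ∂(mollify φ ε' ω) := lintegral_mono hindF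
    _ = 4 * (∑' j : ℕ, (B/2^j)^2 * mollify φ ε' ω (Tj j))
        + 4 * (s*Astar) * mollify φ ε' ω Set.univ := by
        have hFx : F = fun x =>
            4 * (∑' j : ℕ, (B/2^j)^2 * (Tj j).indicator 1 x) + 4 * (s * Astar) := rfl
        rw [hFx]
        have hmeas : Measurable fun x => ∑' j : ℕ, (B/2^j)^2 * (Tj j).indicator 1 x := by
          apply Measurable.ennreal_tsum
          intro j
          exact (measurable_one.indicator (hTjmeas j)).const_mul _
        rw [lintegral_add_left (hmeas.const_mul 4), lintegral_const_mul _ hmeas,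
          lintegral_const, lintegral_tsum (fun j =>
            ((measurable_one.indicator (hTjmeas j)).const_mul _).aemeasurable)]
        congr 1
        congr 1
        refine tsum_congr fun j => ?_
        rw [lintegral_const_mul _ (measurable_one.indicator (hTjmeas j)),
          lintegral_indicator_one (hTjmeas j)]
    _ ≤ 4 * (D * (4 * B * (5^n * μt Set.univ))) + 4 * (s*Astar) * mollify φ ε' ω Set.univ := by
        gcongr
        calc (∑' j : ℕ, (B/2^j)^2 * mollify φ ε' ω (Tj j))
            ≤ ∑' j : ℕ, (B/2^j)^2 * (D * volume (Tj j)) := by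
              refine ENNReal.tsum_le_tsum fun j => ?_
              exact mul_le_mul_right (hW_meas_le _ (hTjmeas j)) _
          _ = D * ∑' j : ℕ, (B/2^j)^2 * volume {p | B / 2^(j+1) < Ms p} := by
              rw [← ENNReal.tsum_mul_left]
              refine tsum_congr fun j => ?_
              rw [hTjdef, measure_toMeasurable]
              ring
          _ ≤ D * (4 * B * (5^n * μt Set.univ)) := by
              refine mul_le_mul_right ?_ _
              exact tsum_levels_le μt (by linarith : (0:ℝ) < 2*R) B
    _ ≤ 4 * (D * (4 * B * (5^n * s))) + 4 * (s*Astar) * mollify φ ε' ω Set.univ := by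
        gcongr
    _ = CT * s := by rw [hCTdef]; ring
end
end

section
/- There is a constant C depending only on the dimension n and the mollifier φ such that for all locally finite positive Borel measures σ, ω on ℝ^n: sup_{0<ε<1/8} A₂(σ_{8ε}, ω_ε) ≤ C · A₂(σ,ω), where σ_{8ε} = σ ∗ φ_{8ε} and ω_ε = ω ∗ φ_ε. -/
open MeasureTheory Set Filter
open scoped ENNReal NNReal

noncomputable section

namespace MollifyA2Aux

variable {n : ℕ}

lemma cube_toSet_eq (Q : Cube n) :
    Q.toSet = Set.pi Set.univ (fun i => Set.Ico (Q.corner i) (Q.corner i + Q.side)) := by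
  ext x; simp [Cube.toSet, Set.mem_pi]

lemma cube_measurable (Q : Cube n) : MeasurableSet Q.toSet := by
  rw [cube_toSet_eq]; exact MeasurableSet.univ_pi fun i => measurableSet_Ico

lemma cube_volume (Q : Cube n) :
    volume Q.toSet = (ENNReal.ofReal Q.side) ^ n := by
  rw [cube_toSet_eq, volume_pi_pi]
  simp [Real.volume_Ico]

lemma cube_volume_pos (Q : Cube n) : 0 < volume Q.toSet := by
  rw [cube_volume]
  exact ENNReal.pow_pos (ENNReal.ofReal_pos.2 Q.side_pos) n

lemma cube_volume_ne_top (Q : Cube n) : volume Q.toSet ≠ ⊤ := by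
  rw [cube_volume]
  exact ENNReal.pow_ne_top ENNReal.ofReal_ne_top

lemma pointwise_bound {φ : (Fin n → ℝ) → ℝ} (hφ : IsAdmissibleMollifier φ)
    {δ : ℝ} (hδ : 0 < δ) (x y : Fin n → ℝ) :
    ENNReal.ofReal ((δ ^ n)⁻¹ * φ (δ⁻¹ • (x - y))) ≤
      if (∀ i, |x i - y i| < δ) then ENNReal.ofReal ((δ ^ n)⁻¹) else 0 := by
  by_cases h : ∀ i, |x i - y i| < δ
  · rw [if_pos h]
    apply ENNReal.ofReal_le_ofReal
    have h1 := (hφ.2.1 (δ⁻¹ • (x - y))).2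
    have h0 : (0:ℝ) ≤ (δ ^ n)⁻¹ := by positivity
    calc (δ ^ n)⁻¹ * φ (δ⁻¹ • (x - y)) ≤ (δ ^ n)⁻¹ * 1 := by
          exact mul_le_mul_of_nonneg_left h1 h0
      _ = (δ ^ n)⁻¹ := mul_one _
  · rw [if_neg h]
    have hz : φ (δ⁻¹ • (x - y)) = 0 := by
      by_contra h0
      apply h
      intro i
      have hi := hφ.2.2.1 _ h0 i
      have : |(δ⁻¹ • (x - y)) i| = δ⁻¹ * |x i - y i| := by
        simp [abs_mul, abs_of_pos (inv_pos.2 hδ)]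
      rw [this] at hi
      calc |x i - y i| = δ * (δ⁻¹ * |x i - y i|) := by field_simp
        _ < δ * 1 := by exact mul_lt_mul_of_pos_left hi hδ
        _ = δ := mul_one _
    simp [hz]

/-- Density (pointwise) bound for the mollified measure of a cube. -/
lemma mollify_le_density {φ : (Fin n → ℝ) → ℝ} (hφ : IsAdmissibleMollifier φ)
    {δ : ℝ} (hδ : 0 < δ) (ν : Measure (Fin n → ℝ)) (Q Q' : Cube n)
    (H : ∀ x ∈ Q.toSet, ∀ y, (∀ i, |x i - y i| < δ) → y ∈ Q'.toSet) :
    mollify φ δ ν Q.toSet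
      ≤ ENNReal.ofReal ((δ ^ n)⁻¹) * ν Q'.toSet * volume Q.toSet := by
  rw [mollify, withDensity_apply _ (cube_measurable Q)]
  calc ∫⁻ x in Q.toSet, ∫⁻ y, ENNReal.ofReal ((δ ^ n)⁻¹ * φ (δ⁻¹ • (x - y))) ∂ν
      ≤ ∫⁻ _x in Q.toSet, ENNReal.ofReal ((δ ^ n)⁻¹) * ν Q'.toSet := by
        refine setLIntegral_mono' (cube_measurable Q) fun x hx => ?_
        calc ∫⁻ y, ENNReal.ofReal ((δ ^ n)⁻¹ * φ (δ⁻¹ • (x - y))) ∂ν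
            ≤ ∫⁻ y, Q'.toSet.indicator (fun _ => ENNReal.ofReal ((δ ^ n)⁻¹)) y ∂ν := by
              refine lintegral_mono fun y => ?_
              refine (pointwise_bound hφ hδ x y).trans ?_
              by_cases h : ∀ i, |x i - y i| < δ
              · rw [if_pos h, Set.indicator_of_mem (H x hx y h)]
              · rw [if_neg h]; exact zero_le
          _ = ENNReal.ofReal ((δ ^ n)⁻¹) * ν Q'.toSet :=
              lintegral_indicator_const (cube_measurable Q') _
    _ = ENNReal.ofReal ((δ ^ n)⁻¹) * ν Q'.toSet * volume Q.toSet :=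
        setLIntegral_const _ _

/-- Covering (Fubini) bound for the mollified measure of a cube. -/
lemma mollify_le_covering {φ : (Fin n → ℝ) → ℝ} (hφ : IsAdmissibleMollifier φ)
    {δ : ℝ} (hδ : 0 < δ) (ν : Measure (Fin n → ℝ)) [SigmaFinite ν] (Q Q' : Cube n)
    (H : ∀ x ∈ Q.toSet, ∀ y, (∀ i, |x i - y i| < δ) → y ∈ Q'.toSet) :
    mollify φ δ ν Q.toSet ≤ (2 : ℝ≥0∞) ^ n * ν Q'.toSet := by
  rw [mollify, withDensity_apply _ (cube_measurable Q)]
  have hcont : Continuous fun p : (Fin n → ℝ) × (Fin n → ℝ) =>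
      ENNReal.ofReal ((δ ^ n)⁻¹ * φ (δ⁻¹ • (p.1 - p.2))) := by
    apply ENNReal.continuous_ofReal.comp
    exact continuous_const.mul (hφ.1.continuous.comp
      (show Continuous fun p : (Fin n → ℝ) × (Fin n → ℝ) => δ⁻¹ • (p.1 - p.2) by fun_prop))
  have hmeas : AEMeasurable
      (Function.uncurry fun x y : Fin n → ℝ =>
        ENNReal.ofReal ((δ ^ n)⁻¹ * φ (δ⁻¹ • (x - y))))
      ((volume.restrict Q.toSet).prod ν) := hcont.measurable.aemeasurable
  rw [lintegral_lintegral_swap hmeas]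
  calc ∫⁻ y, ∫⁻ x in Q.toSet, ENNReal.ofReal ((δ ^ n)⁻¹ * φ (δ⁻¹ • (x - y))) ∂volume ∂ν
      ≤ ∫⁻ y, Q'.toSet.indicator (fun _ => (2 : ℝ≥0∞) ^ n) y ∂ν := by
        refine lintegral_mono fun y => ?_
        by_cases hy : y ∈ Q'.toSet
        · rw [Set.indicator_of_mem hy]
          have hset : MeasurableSet {x : Fin n → ℝ | ∀ i, |x i - y i| < δ} := by
            have : {x : Fin n → ℝ | ∀ i, |x i - y i| < δ}
                = Set.pi Set.univ (fun i => Set.Ioo (y i - δ) (y i + δ)) := by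
              ext x
              simp only [Set.mem_setOf_eq, Set.mem_pi, Set.mem_univ, Set.mem_Ioo,
                forall_true_left]
              constructor
              · intro h i
                have := abs_lt.1 (h i); constructor <;> linarith [this.1, this.2]
              · intro h i
                have := h i; rw [abs_lt]; constructor <;> linarith [this.1, this.2]
            rw [this]
            exact MeasurableSet.univ_pi fun i => measurableSet_Ioo
          calc ∫⁻ x in Q.toSet, ENNReal.ofReal ((δ ^ n)⁻¹ * φ (δ⁻¹ • (x - y)))
              ≤ ∫⁻ x in Q.toSet, {x : Fin n → ℝ | ∀ i, |x i - y i| < δ}.indicator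
                  (fun _ => ENNReal.ofReal ((δ ^ n)⁻¹)) x := by
                refine setLIntegral_mono' (cube_measurable Q) fun x _ => ?_
                refine (pointwise_bound hφ hδ x y).trans ?_
                by_cases h : ∀ i, |x i - y i| < δ
                · rw [if_pos h, Set.indicator_of_mem
                    (show x ∈ {x : Fin n → ℝ | ∀ i, |x i - y i| < δ} from h)]
                · rw [if_neg h]; exact zero_le
            _ ≤ ∫⁻ x, {x : Fin n → ℝ | ∀ i, |x i - y i| < δ}.indicator
                  (fun _ => ENNReal.ofReal ((δ ^ n)⁻¹)) x :=
                setLIntegral_le_lintegral _ _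
            _ = ENNReal.ofReal ((δ ^ n)⁻¹)
                  * volume {x : Fin n → ℝ | ∀ i, |x i - y i| < δ} :=
                lintegral_indicator_const hset _
            _ ≤ (2 : ℝ≥0∞) ^ n := by
                have hvol : volume {x : Fin n → ℝ | ∀ i, |x i - y i| < δ}
                    ≤ ENNReal.ofReal ((2 * δ) ^ n) := by
                  have hsub : {x : Fin n → ℝ | ∀ i, |x i - y i| < δ}
                      ⊆ Set.pi Set.univ (fun i => Set.Ioo (y i - δ) (y i + δ)) := by
                    intro x h i _
                    have := abs_lt.1 (h i)
                    exact ⟨by linarith [this.1], by linarith [this.2]⟩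
                  refine (measure_mono hsub).trans ?_
                  rw [volume_pi_pi]
                  simp only [Real.volume_Ioo]
                  rw [Finset.prod_congr rfl fun i _ => by
                    rw [show y i + δ - (y i - δ) = 2 * δ by ring]]
                  rw [Finset.prod_const, ENNReal.ofReal_pow (by positivity)]
                  simp
                calc ENNReal.ofReal ((δ ^ n)⁻¹)
                      * volume {x : Fin n → ℝ | ∀ i, |x i - y i| < δ}
                    ≤ ENNReal.ofReal ((δ ^ n)⁻¹) * ENNReal.ofReal ((2 * δ) ^ n) := by
                      exact mul_le_mul_right hvol _
                  _ = ENNReal.ofReal ((δ ^ n)⁻¹ * (2 * δ) ^ n) :=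
                      (ENNReal.ofReal_mul (by positivity)).symm
                  _ = (2 : ℝ≥0∞) ^ n := by
                      rw [show (δ ^ n)⁻¹ * (2 * δ) ^ n = 2 ^ n by
                        rw [mul_pow]; field_simp]
                      rw [ENNReal.ofReal_pow (by norm_num)]
                      norm_num
        · rw [Set.indicator_of_notMem hy]
          have hzero : ∀ x ∈ Q.toSet,
              ENNReal.ofReal ((δ ^ n)⁻¹ * φ (δ⁻¹ • (x - y))) ≤ 0 := by
            intro x hx
            refine (pointwise_bound hφ hδ x y).trans ?_
            rw [if_neg fun h => hy (H x hx y h)]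
          calc ∫⁻ x in Q.toSet, ENNReal.ofReal ((δ ^ n)⁻¹ * φ (δ⁻¹ • (x - y)))
              ≤ ∫⁻ _x in Q.toSet, 0 := setLIntegral_mono' (cube_measurable Q) hzero
            _ = 0 := by simp
    _ = (2 : ℝ≥0∞) ^ n * ν Q'.toSet := lintegral_indicator_const (cube_measurable Q') _

/-- The key geometric lemma: a single dyadic-power cube `Q'` controlling both
mollifications on `Q`. -/
lemma key {φ : (Fin n → ℝ) → ℝ} (hφ : IsAdmissibleMollifier φ)
    {ε : ℝ} (hε : 0 < ε) (Q : Cube n) (hQ : Q.memP) :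
    ∃ Q' : Cube n, Q'.memP ∧
      ∀ (ν : Measure (Fin n → ℝ)), SigmaFinite ν → ∀ δ : ℝ, ε ≤ δ → δ ≤ 8 * ε →
        mollify φ δ ν Q.toSet
          ≤ (2 : ℝ≥0∞) ^ (6 * n) * (ν Q'.toSet / volume Q'.toSet) * volume Q.toSet := by
  obtain ⟨ℓ, hℓ⟩ := hQ
  have hspos : (0:ℝ) < (2:ℝ) ^ ℓ := zpow_pos (by norm_num) ℓ
  by_cases hc : (2:ℝ) ^ ℓ ≤ ε
  · -- small cube: use the density bound
    set m : ℤ := Int.log 2 ε + 6 with hm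
    have hm1 : (32:ℝ) * ε < (2:ℝ) ^ m := by
      have h1 : ε < (2:ℝ) ^ (Int.log 2 ε + 1) := by
        have := Int.lt_zpow_succ_log_self (b := 2) (by norm_num) ε
        simpa using this
      have : (2:ℝ) ^ m = 32 * (2:ℝ) ^ (Int.log 2 ε + 1) := by
        rw [hm, show Int.log 2 ε + 6 = (Int.log 2 ε + 1) + 5 by ring, zpow_add₀ (by norm_num)]
        norm_num [mul_comm]
      rw [this]
      nlinarith
    have hm2 : (2:ℝ) ^ m ≤ 64 * ε := by
      have h1 : (2:ℝ) ^ (Int.log 2 ε) ≤ ε := by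
        have := Int.zpow_log_le_self (b := 2) (by norm_num) hε
        simpa using this
      have : (2:ℝ) ^ m = 64 * (2:ℝ) ^ (Int.log 2 ε) := by
        rw [hm, zpow_add₀ (by norm_num)]
        norm_num [mul_comm]
      rw [this]
      nlinarith
    refine ⟨⟨fun i => Q.corner i - 8 * ε, (2:ℝ) ^ m, zpow_pos (by norm_num) m⟩,
      ⟨m, rfl⟩, ?_⟩
    intro ν hν δ hδ1 hδ2
    have hδ : 0 < δ := lt_of_lt_of_le hε hδ1
    have H : ∀ x ∈ Q.toSet, ∀ y, (∀ i, |x i - y i| < δ) →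
        y ∈ Cube.toSet ⟨fun i => Q.corner i - 8 * ε, (2:ℝ) ^ m, zpow_pos (by norm_num) m⟩ := by
      intro x hx y hy i
      have h1 := abs_lt.1 (hy i)
      have h2 := hx i
      constructor
      · simp only; linarith [h1.2, h2.1]
      · simp only
        have : x i < Q.corner i + ε := by
          have := h2.2; rw [hℓ] at this; linarith
        linarith [h1.1]
    set Q' : Cube n := ⟨fun i => Q.corner i - 8 * ε, (2:ℝ) ^ m, zpow_pos (by norm_num) m⟩
    have hbound := mollify_le_density hφ hδ ν Q Q' H
    refine hbound.trans ?_
    have hrw : ν Q'.toSet = ν Q'.toSet / volume Q'.toSet * volume Q'.toSet :=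
      (ENNReal.div_mul_cancel (cube_volume_pos Q').ne' (cube_volume_ne_top Q')).symm
    have hfactor : ENNReal.ofReal ((δ ^ n)⁻¹) * volume Q'.toSet ≤ (2:ℝ≥0∞) ^ (6 * n) := by
      rw [cube_volume Q']
      show ENNReal.ofReal ((δ ^ n)⁻¹) * (ENNReal.ofReal ((2:ℝ) ^ m)) ^ n ≤ _
      calc ENNReal.ofReal ((δ ^ n)⁻¹) * (ENNReal.ofReal ((2:ℝ) ^ m)) ^ n
          = ENNReal.ofReal ((δ ^ n)⁻¹ * ((2:ℝ) ^ m) ^ n) := by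
            rw [ENNReal.ofReal_mul (by positivity),
              ENNReal.ofReal_pow (le_of_lt (zpow_pos (by norm_num) m))]
        _ ≤ ENNReal.ofReal ((64:ℝ) ^ n) := by
            apply ENNReal.ofReal_le_ofReal
            have h1 : (δ ^ n)⁻¹ * ((2:ℝ) ^ m) ^ n = ((2:ℝ) ^ m / δ) ^ n := by
              rw [div_pow]; field_simp
            rw [h1]
            apply pow_le_pow_left₀ (by positivity)
            rw [div_le_iff₀ hδ]
            calc (2:ℝ) ^ m ≤ 64 * ε := hm2
              _ ≤ 64 * δ := by linarith
        _ = (2 : ℝ≥0∞) ^ (6 * n) := by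
            rw [ENNReal.ofReal_pow (by norm_num), pow_mul]
            congr 1
            rw [ENNReal.ofReal_ofNat]
            norm_num
    calc ENNReal.ofReal ((δ ^ n)⁻¹) * ν Q'.toSet * volume Q.toSet
        = ENNReal.ofReal ((δ ^ n)⁻¹)
            * (ν Q'.toSet / volume Q'.toSet * volume Q'.toSet) * volume Q.toSet := by
          conv_lhs => rw [hrw]
      _ = ENNReal.ofReal ((δ ^ n)⁻¹) * volume Q'.toSet
            * (ν Q'.toSet / volume Q'.toSet) * volume Q.toSet := by ring
      _ ≤ (2:ℝ≥0∞) ^ (6 * n) * (ν Q'.toSet / volume Q'.toSet) * volume Q.toSet :=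
          mul_le_mul_left (mul_le_mul_left hfactor _) _
  · -- big cube: use the covering bound
    push_neg at hc
    refine ⟨⟨fun i => Q.corner i - 8 * (2:ℝ) ^ ℓ, (2:ℝ) ^ (ℓ + 5),
      zpow_pos (by norm_num) _⟩, ⟨ℓ + 5, rfl⟩, ?_⟩
    intro ν hν δ hδ1 hδ2
    have hδ : 0 < δ := lt_of_lt_of_le hε hδ1
    set Q' : Cube n := ⟨fun i => Q.corner i - 8 * (2:ℝ) ^ ℓ, (2:ℝ) ^ (ℓ + 5),
      zpow_pos (by norm_num) _⟩
    have hside : (2:ℝ) ^ (ℓ + 5) = 32 * (2:ℝ) ^ ℓ := by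
      rw [zpow_add₀ (by norm_num)]; norm_num [mul_comm]
    have H : ∀ x ∈ Q.toSet, ∀ y, (∀ i, |x i - y i| < δ) → y ∈ Q'.toSet := by
      intro x hx y hy i
      have h1 := abs_lt.1 (hy i)
      have h2 := hx i
      have hδs : δ < 8 * (2:ℝ) ^ ℓ := by linarith
      constructor
      · show Q.corner i - 8 * (2:ℝ) ^ ℓ ≤ y i
        linarith [h1.2, h2.1]
      · show y i < Q.corner i - 8 * (2:ℝ) ^ ℓ + (2:ℝ) ^ (ℓ + 5)
        rw [hside]
        have : x i < Q.corner i + (2:ℝ) ^ ℓ := by rw [hℓ] at h2; exact h2.2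
        linarith [h1.1]
    haveI := hν
    have hbound := mollify_le_covering hφ hδ ν Q Q' H
    refine hbound.trans ?_
    have hrw : ν Q'.toSet = ν Q'.toSet / volume Q'.toSet * volume Q'.toSet :=
      (ENNReal.div_mul_cancel (cube_volume_pos Q').ne' (cube_volume_ne_top Q')).symm
    have hvol : volume Q'.toSet = (2:ℝ≥0∞) ^ (5 * n) * volume Q.toSet := by
      rw [cube_volume Q', cube_volume Q, hℓ]
      show (ENNReal.ofReal ((2:ℝ) ^ (ℓ + 5))) ^ n = _
      rw [hside, ENNReal.ofReal_mul (by norm_num), mul_pow]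
      congr 1
      rw [ENNReal.ofReal_ofNat, pow_mul]
      norm_num
    refine le_of_eq ?_
    calc (2:ℝ≥0∞) ^ n * ν Q'.toSet
        = (2:ℝ≥0∞) ^ n * (ν Q'.toSet / volume Q'.toSet * volume Q'.toSet) := by
          conv_lhs => rw [hrw]
      _ = (2:ℝ≥0∞) ^ n * (2:ℝ≥0∞) ^ (5 * n)
            * (ν Q'.toSet / volume Q'.toSet) * volume Q.toSet := by
          rw [hvol]; ring
      _ = (2:ℝ≥0∞) ^ (6 * n) * (ν Q'.toSet / volume Q'.toSet) * volume Q.toSet := by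
          rw [← pow_add, show n + 5 * n = 6 * n by ring]

end MollifyA2Aux

/-- **Uniform `A₂` bound for mollified weights.** There is a constant `C` depending only
on the dimension `n` and the mollifier `φ` such that for all locally finite positive
Borel measures `σ, ω` on `ℝⁿ`:
`sup_{0<ε<1/8} A₂(σ_{8ε}, ω_ε) ≤ C · A₂(σ,ω)`. -/
theorem mollified_A2_bound
    {n : ℕ} (φ : (Fin n → ℝ) → ℝ) (hφ : IsAdmissibleMollifier φ) :
    ∃ C : ℝ≥0∞, 0 < C ∧ C ≠ ⊤ ∧
      ∀ σ ω : Measure (Fin n → ℝ),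
        IsLocallyFiniteMeasure σ → IsLocallyFiniteMeasure ω →
        (⨆ ε ∈ Set.Ioo (0:ℝ) (1/8), A2 (mollify φ (8 * ε) σ) (mollify φ ε ω))
          ≤ C * A2 σ ω := by
  refine ⟨(2 : ℝ≥0∞) ^ (12 * n), ENNReal.pow_pos (by norm_num) _,
    ENNReal.pow_ne_top (by norm_num), ?_⟩
  intro σ ω hσ hω
  haveI := hσ; haveI := hω
  haveI : SigmaFinite σ := inferInstance
  haveI : SigmaFinite ω := inferInstance
  refine iSup₂_le fun ε hε => ?_
  obtain ⟨hε0, hε8⟩ := hε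
  show A2 (mollify φ (8 * ε) σ) (mollify φ ε ω) ≤ _
  rw [A2]
  refine iSup₂_le fun Q hQP => ?_
  obtain ⟨Q', hQ'P, hkey⟩ := MollifyA2Aux.key hφ hε0 Q hQP
  have h1 : mollify φ (8 * ε) σ Q.toSet / volume Q.toSet
      ≤ (2 : ℝ≥0∞) ^ (6 * n) * (σ Q'.toSet / volume Q'.toSet) :=
    ENNReal.div_le_of_le_mul (hkey σ ‹_› (8 * ε) (by linarith) le_rfl)
  have h2 : mollify φ ε ω Q.toSet / volume Q.toSet
      ≤ (2 : ℝ≥0∞) ^ (6 * n) * (ω Q'.toSet / volume Q'.toSet) :=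
    ENNReal.div_le_of_le_mul (hkey ω ‹_› ε le_rfl (by linarith))
  calc mollify φ (8 * ε) σ Q.toSet / volume Q.toSet
        * (mollify φ ε ω Q.toSet / volume Q.toSet)
      ≤ ((2 : ℝ≥0∞) ^ (6 * n) * (σ Q'.toSet / volume Q'.toSet))
        * ((2 : ℝ≥0∞) ^ (6 * n) * (ω Q'.toSet / volume Q'.toSet)) :=
        mul_le_mul' h1 h2
    _ = (2 : ℝ≥0∞) ^ (12 * n)
        * ((σ Q'.toSet / volume Q'.toSet) * (ω Q'.toSet / volume Q'.toSet)) := by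
        rw [mul_mul_mul_comm, ← pow_add, show 6 * n + 6 * n = 12 * n by ring]
    _ ≤ (2 : ℝ≥0∞) ^ (12 * n) * A2 σ ω := by
        refine mul_le_mul_right ?_ _
        rw [A2]
        exact le_iSup₂ (f := fun (R : Cube n) (_ : R.memP) =>
          σ R.toSet / volume R.toSet * (ω R.toSet / volume R.toSet)) Q' hQ'P
end
end

section
/- Let σ be a locally finite positive Borel measure on ℝ^n. (i) For every cube Q and every 0 < ε < ℓ(Q)/2: σ( (1 − 2ε/ℓ(Q))Q ) ≤ σ_ε(Q) ≤ σ( (1 + 2ε/ℓ(Q))Q ); in particular, if σ(∂Q) = 0 then lim_{ε→0} σ_ε(Q) = σ(Q). (ii) If ω is another locally finite positive Borel measure, μ = σ + ω, and Q ∈ P^null(μ), then for every x ∈ ℝ^n: M^null(1_Q σ)(x) ≤ liminf_{ε→0} M(1_Q σ_ε)(x). -/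
open MeasureTheory Set Filter
open scoped ENNReal NNReal

noncomputable section

namespace MollAux

variable {n : ℕ}

/-- Half-open box. -/
def box (a b : Fin n → ℝ) : Set (Fin n → ℝ) := Set.univ.pi fun i => Set.Ico (a i) (b i)

/-- Open box. -/
def obox (a b : Fin n → ℝ) : Set (Fin n → ℝ) := Set.univ.pi fun i => Set.Ioo (a i) (b i)

/-- Closed box. -/
def cbox (a b : Fin n → ℝ) : Set (Fin n → ℝ) := Set.univ.pi fun i => Set.Icc (a i) (b i)

lemma mem_box {a b x : Fin n → ℝ} : x ∈ box a b ↔ ∀ i, a i ≤ x i ∧ x i < b i := by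
  simp [box]

lemma mem_obox {a b x : Fin n → ℝ} : x ∈ obox a b ↔ ∀ i, a i < x i ∧ x i < b i := by
  simp [obox]

lemma mem_cbox {a b x : Fin n → ℝ} : x ∈ cbox a b ↔ ∀ i, a i ≤ x i ∧ x i ≤ b i := by
  simp [cbox, Pi.le_def, forall_and]

lemma measurableSet_box (a b : Fin n → ℝ) : MeasurableSet (box a b) :=
  MeasurableSet.univ_pi fun _ => measurableSet_Ico

lemma box_mono {a b a' b' : Fin n → ℝ} (ha : ∀ i, a' i ≤ a i) (hb : ∀ i, b i ≤ b' i) :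
    box a b ⊆ box a' b' := fun x hx => mem_box.2 fun i =>
  ⟨(ha i).trans (mem_box.1 hx i).1, (mem_box.1 hx i).2.trans_le (hb i)⟩

lemma obox_subset_box (a b : Fin n → ℝ) : obox a b ⊆ box a b := fun x hx =>
  mem_box.2 fun i => ⟨(mem_obox.1 hx i).1.le, (mem_obox.1 hx i).2⟩

lemma box_subset_cbox (a b : Fin n → ℝ) : box a b ⊆ cbox a b := fun x hx =>
  mem_cbox.2 fun i => ⟨(mem_box.1 hx i).1, (mem_box.1 hx i).2.le⟩

lemma isOpen_obox (a b : Fin n → ℝ) : IsOpen (obox a b) :=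
  isOpen_set_pi Set.finite_univ fun _ _ => isOpen_Ioo

lemma isCompact_cbox (a b : Fin n → ℝ) : IsCompact (cbox a b) :=
  isCompact_univ_pi fun _ => isCompact_Icc

lemma cube_toSet_eq (Q : Cube n) :
    Q.toSet = box Q.corner (fun i => Q.corner i + Q.side) := by
  ext x; simp [Cube.toSet, mem_box]

lemma measurableSet_toSet (Q : Cube n) : MeasurableSet Q.toSet := by
  rw [cube_toSet_eq]; exact measurableSet_box _ _

lemma interior_toSet (Q : Cube n) :
    interior Q.toSet = obox Q.corner (fun i => Q.corner i + Q.side) := by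
  rw [cube_toSet_eq, box, interior_pi_set Set.finite_univ]
  ext x
  simp [obox, interior_Ico, Function.comp]

lemma closure_toSet (Q : Cube n) :
    closure Q.toSet = cbox Q.corner (fun i => Q.corner i + Q.side) := by
  rw [cube_toSet_eq, box, closure_pi_set]
  ext x
  simp only [cbox, Set.mem_univ_pi, Function.comp]
  refine forall_congr' fun i => ?_
  rw [closure_Ico (by linarith [Q.side_pos] : Q.corner i ≠ Q.corner i + Q.side)]

lemma dilate_shrink (Q : Cube n) (ε : ℝ) :
    Q.dilate (1 - 2 * ε / Q.side) =
      box (fun i => Q.corner i + ε) (fun i => Q.corner i + Q.side - ε) := by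
  have hs : Q.side ≠ 0 := Q.side_pos.ne'
  have h : (1 - 2 * ε / Q.side - 1) * Q.side / 2 = -ε := by field_simp; ring
  ext x
  simp only [Cube.dilate, Set.mem_setOf_eq, mem_box, h]
  refine forall_congr' fun i => ?_
  constructor
  · intro hi; exact ⟨by linarith [hi.1], by linarith [hi.2]⟩
  · intro hi; exact ⟨by linarith [hi.1], by linarith [hi.2]⟩

lemma dilate_expand (Q : Cube n) (ε : ℝ) :
    Q.dilate (1 + 2 * ε / Q.side) =
      box (fun i => Q.corner i - ε) (fun i => Q.corner i + Q.side + ε) := by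
  have hs : Q.side ≠ 0 := Q.side_pos.ne'
  have h : (1 + 2 * ε / Q.side - 1) * Q.side / 2 = ε := by field_simp; ring
  ext x
  simp only [Cube.dilate, Set.mem_setOf_eq, mem_box, h]

end MollAux

namespace MollAux

variable {n : ℕ} {φ : (Fin n → ℝ) → ℝ}

lemma phi_cont (hφ : IsAdmissibleMollifier φ) : Continuous φ := hφ.1.continuous

lemma phi_nonneg (hφ : IsAdmissibleMollifier φ) (x : Fin n → ℝ) : 0 ≤ φ x := (hφ.2.1 x).1

lemma phi_hcs (hφ : IsAdmissibleMollifier φ) : HasCompactSupport φ := by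
  apply HasCompactSupport.intro (isCompact_univ_pi fun _ : Fin n => isCompact_Icc (a := (-1:ℝ)) (b := 1))
  intro x hx
  by_contra h
  exact hx (Set.mem_univ_pi.2 fun i => abs_le.1 (le_of_lt (hφ.2.2.1 x h i)))

lemma phi_integrable (hφ : IsAdmissibleMollifier φ) : Integrable φ :=
  (phi_cont hφ).integrable_of_hasCompactSupport (phi_hcs hφ)

lemma lintegral_kernel (hφ : IsAdmissibleMollifier φ) {ε : ℝ} (hε : 0 < ε) (y : Fin n → ℝ) :
    ∫⁻ x : Fin n → ℝ, ENNReal.ofReal ((ε ^ n)⁻¹ * φ (ε⁻¹ • (x - y))) = 1 := by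
  have hεn : (0:ℝ) < ε ^ n := pow_pos hε n
  set g : (Fin n → ℝ) → ℝ≥0∞ := fun z => ENNReal.ofReal ((ε ^ n)⁻¹ * φ z) with hg
  have hinv : (ε : ℝ)⁻¹ ≠ 0 := inv_ne_zero hε.ne'
  have h1 : ∫⁻ x : Fin n → ℝ, ENNReal.ofReal ((ε ^ n)⁻¹ * φ (ε⁻¹ • (x - y)))
      = ∫⁻ x : Fin n → ℝ, g (ε⁻¹ • x) :=
    lintegral_sub_right_eq_self (fun x => g (ε⁻¹ • x)) y
  have h2 : ∫⁻ x : Fin n → ℝ, g (ε⁻¹ • x) = ENNReal.ofReal (ε ^ n) * ∫⁻ x, g x := by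
    let e : (Fin n → ℝ) ≃ᵐ (Fin n → ℝ) :=
      (Homeomorph.smul (isUnit_iff_ne_zero.2 hinv).unit).toMeasurableEquiv
    have he : (⇑e) = fun x : Fin n → ℝ => (ε⁻¹ : ℝ) • x := by
      funext x
      rfl
    calc ∫⁻ x : Fin n → ℝ, g (ε⁻¹ • x) = ∫⁻ x, g (e x) := by rw [he]
      _ = ∫⁻ x, g x ∂(Measure.map e volume) := (lintegral_map_equiv g e).symm
      _ = ENNReal.ofReal (ε ^ n) * ∫⁻ x, g x := by
          rw [show (Measure.map e volume) = Measure.map (fun x : Fin n → ℝ => (ε⁻¹ : ℝ) • x) volume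
              from by rw [← he]]
          rw [show (Measure.map (fun x : Fin n → ℝ => (ε⁻¹ : ℝ) • x) volume)
              = Measure.map ((ε⁻¹ : ℝ) • ·) volume from rfl]
          rw [Measure.map_addHaar_smul volume hinv, lintegral_smul_measure]
          congr 1
          rw [Module.finrank_fin_fun, inv_pow, inv_inv, abs_of_pos hεn]
  have h3 : ∫⁻ x, g x = ENNReal.ofReal ((ε ^ n)⁻¹) := by
    rw [hg]
    rw [← ofReal_integral_eq_lintegral_ofReal ((phi_integrable hφ).const_mul _)
      (Filter.Eventually.of_forall fun x => mul_nonneg (inv_nonneg.2 hεn.le) (phi_nonneg hφ x))]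
    rw [integral_const_mul, hφ.2.2.2.2, mul_one]
  rw [h1, h2, h3, ← ENNReal.ofReal_mul hεn.le, mul_inv_cancel₀ hεn.ne', ENNReal.ofReal_one]

lemma mollify_box (hφ : IsAdmissibleMollifier φ) (σ : Measure (Fin n → ℝ)) [SigmaFinite σ]
    (ε : ℝ) (a b : Fin n → ℝ) :
    mollify φ ε σ (box a b)
      = ∫⁻ y, (∫⁻ x in box a b, ENNReal.ofReal ((ε ^ n)⁻¹ * φ (ε⁻¹ • (x - y)))) ∂σ := by
  rw [mollify, withDensity_apply _ (measurableSet_box a b)]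
  have hmeas : AEMeasurable
      (Function.uncurry fun x y : Fin n → ℝ => ENNReal.ofReal ((ε ^ n)⁻¹ * φ (ε⁻¹ • (x - y))))
      ((volume.restrict (box a b)).prod σ) := by
    apply Measurable.aemeasurable
    apply Continuous.measurable
    exact ENNReal.continuous_ofReal.comp (continuous_const.mul ((phi_cont hφ).comp
      ((continuous_fst.sub continuous_snd).const_smul (ε⁻¹ : ℝ))))
  exact lintegral_lintegral_swap hmeas

lemma abs_lt_of_phi_ne_zero (hφ : IsAdmissibleMollifier φ) {ε : ℝ} (hε : 0 < ε)
    {z : Fin n → ℝ} (hz : φ (ε⁻¹ • z) ≠ 0) (i : Fin n) : |z i| < ε := by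
  have hlt := hφ.2.2.1 _ hz i
  have hsm : (ε⁻¹ • z) i = ε⁻¹ * z i := rfl
  rw [hsm, abs_mul, abs_inv, abs_of_pos hε] at hlt
  by_contra hge
  push_neg at hge
  have h1 : ε⁻¹ * ε ≤ ε⁻¹ * |z i| := mul_le_mul_of_nonneg_left hge (inv_nonneg.2 hε.le)
  rw [inv_mul_cancel₀ hε.ne'] at h1
  linarith

lemma mollify_le_box (hφ : IsAdmissibleMollifier φ) (σ : Measure (Fin n → ℝ)) [SigmaFinite σ]
    {ε : ℝ} (hε : 0 < ε) (a b : Fin n → ℝ) :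
    mollify φ ε σ (box a b) ≤ σ (box (fun i => a i - ε) (fun i => b i + ε)) := by
  rw [mollify_box hφ σ ε a b]
  have hbound : ∀ y, (∫⁻ x in box a b, ENNReal.ofReal ((ε ^ n)⁻¹ * φ (ε⁻¹ • (x - y))))
      ≤ (box (fun i => a i - ε) (fun i => b i + ε)).indicator (fun _ => 1) y := by
    intro y
    by_cases hy : y ∈ box (fun i => a i - ε) (fun i => b i + ε)
    · rw [Set.indicator_of_mem hy]
      calc (∫⁻ x in box a b, ENNReal.ofReal ((ε ^ n)⁻¹ * φ (ε⁻¹ • (x - y))))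
          ≤ ∫⁻ x, ENNReal.ofReal ((ε ^ n)⁻¹ * φ (ε⁻¹ • (x - y))) := setLIntegral_le_lintegral _ _
        _ = 1 := lintegral_kernel hφ hε y
    · rw [Set.indicator_of_notMem hy]
      have hzero : ∀ x ∈ box a b, ENNReal.ofReal ((ε ^ n)⁻¹ * φ (ε⁻¹ • (x - y))) = 0 := by
        intro x hx
        have hφ0 : φ (ε⁻¹ • (x - y)) = 0 := by
          by_contra hne
          apply hy
          rw [mem_box]
          intro i
          have habs := abs_lt.1 (abs_lt_of_phi_ne_zero hφ hε hne i)
          have hsub : (x - y) i = x i - y i := rfl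
          rw [hsub] at habs
          have hxi := mem_box.1 hx i
          exact ⟨by linarith [hxi.1, habs.2], by linarith [hxi.2, habs.1]⟩
        rw [hφ0, mul_zero, ENNReal.ofReal_zero]
      refine le_of_eq ?_
      calc (∫⁻ x in box a b, ENNReal.ofReal ((ε ^ n)⁻¹ * φ (ε⁻¹ • (x - y))))
          = ∫⁻ _x in box a b, 0 :=
            setLIntegral_congr_fun (measurableSet_box a b) hzero
        _ = 0 := by simp
  calc (∫⁻ y, (∫⁻ x in box a b, ENNReal.ofReal ((ε ^ n)⁻¹ * φ (ε⁻¹ • (x - y)))) ∂σ)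
      ≤ ∫⁻ y, (box (fun i => a i - ε) (fun i => b i + ε)).indicator (fun _ => 1) y ∂σ :=
        lintegral_mono (μ := σ) hbound
    _ = σ (box (fun i => a i - ε) (fun i => b i + ε)) := by
        rw [lintegral_indicator (measurableSet_box _ _)]
        simp

lemma le_mollify_box (hφ : IsAdmissibleMollifier φ) (σ : Measure (Fin n → ℝ)) [SigmaFinite σ]
    {ε : ℝ} (hε : 0 < ε) (a b : Fin n → ℝ) :
    σ (box (fun i => a i + ε) (fun i => b i - ε)) ≤ mollify φ ε σ (box a b) := by
  rw [mollify_box hφ σ ε a b]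
  have hbound : ∀ y, (box (fun i => a i + ε) (fun i => b i - ε)).indicator (fun _ => 1) y
      ≤ (∫⁻ x in box a b, ENNReal.ofReal ((ε ^ n)⁻¹ * φ (ε⁻¹ • (x - y)))) := by
    intro y
    by_cases hy : y ∈ box (fun i => a i + ε) (fun i => b i - ε)
    · rw [Set.indicator_of_mem hy]
      have hvanish : ∀ x : Fin n → ℝ, x ∉ box a b →
          ENNReal.ofReal ((ε ^ n)⁻¹ * φ (ε⁻¹ • (x - y))) = 0 := by
        intro x hx
        have hφ0 : φ (ε⁻¹ • (x - y)) = 0 := by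
          by_contra hne
          apply hx
          rw [mem_box]
          intro i
          have habs := abs_lt.1 (abs_lt_of_phi_ne_zero hφ hε hne i)
          have hsub : (x - y) i = x i - y i := rfl
          rw [hsub] at habs
          have hyi := mem_box.1 hy i
          exact ⟨by linarith [hyi.1, habs.2], by linarith [hyi.2, habs.1]⟩
        rw [hφ0, mul_zero, ENNReal.ofReal_zero]
      have heq : (∫⁻ x in box a b, ENNReal.ofReal ((ε ^ n)⁻¹ * φ (ε⁻¹ • (x - y))))
          = ∫⁻ x, ENNReal.ofReal ((ε ^ n)⁻¹ * φ (ε⁻¹ • (x - y))) := by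
        rw [← lintegral_indicator (measurableSet_box a b)]
        apply lintegral_congr
        intro x
        by_cases hx : x ∈ box a b
        · rw [Set.indicator_of_mem hx]
        · rw [Set.indicator_of_notMem hx, hvanish x hx]
      rw [heq, lintegral_kernel hφ hε y]
    · rw [Set.indicator_of_notMem hy]
      exact zero_le
  calc σ (box (fun i => a i + ε) (fun i => b i - ε))
      = ∫⁻ y, (box (fun i => a i + ε) (fun i => b i - ε)).indicator (fun _ => 1) y ∂σ := by
        rw [lintegral_indicator (measurableSet_box _ _)]
        simp
    _ ≤ ∫⁻ y, (∫⁻ x in box a b, ENNReal.ofReal ((ε ^ n)⁻¹ * φ (ε⁻¹ • (x - y)))) ∂σ :=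
        lintegral_mono (μ := σ) hbound

end MollAux

namespace MollAux

variable {n : ℕ} {φ : (Fin n → ℝ) → ℝ}

def shrink (a b : Fin n → ℝ) (k : ℕ) : Set (Fin n → ℝ) :=
  box (fun i => a i + ((k:ℝ)+1)⁻¹) (fun i => b i - ((k:ℝ)+1)⁻¹)

def expand (a b : Fin n → ℝ) (k : ℕ) : Set (Fin n → ℝ) :=
  box (fun i => a i - ((k:ℝ)+1)⁻¹) (fun i => b i + ((k:ℝ)+1)⁻¹)

lemma inv_succ_le_inv_succ {k l : ℕ} (hkl : k ≤ l) : ((l:ℝ)+1)⁻¹ ≤ ((k:ℝ)+1)⁻¹ := by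
  rw [← one_div, ← one_div]
  apply one_div_le_one_div_of_le
  · positivity
  · have : (k:ℝ) ≤ l := Nat.cast_le.2 hkl
    linarith

lemma shrink_mono (a b : Fin n → ℝ) : Monotone (shrink a b) := fun k l hkl => by
  have h := inv_succ_le_inv_succ hkl
  exact box_mono (fun i => by linarith) (fun i => by linarith)

lemma expand_anti (a b : Fin n → ℝ) : Antitone (expand a b) := fun k l hkl => by
  have h := inv_succ_le_inv_succ hkl
  exact box_mono (fun i => by linarith) (fun i => by linarith)

lemma iUnion_shrink (a b : Fin n → ℝ) : (⋃ k, shrink a b k) = obox a b := by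
  ext x
  simp only [Set.mem_iUnion]
  constructor
  · rintro ⟨k, hk⟩
    rw [mem_obox]
    intro i
    have h := mem_box.1 hk i
    have hpos : (0:ℝ) < ((k:ℝ)+1)⁻¹ := by positivity
    exact ⟨by linarith [h.1], by linarith [h.2]⟩
  · intro hx
    have hch : ∀ i : Fin n, ∃ k : ℕ, ((k:ℝ)+1)⁻¹ < min (x i - a i) (b i - x i) := by
      intro i
      have h := mem_obox.1 hx i
      obtain ⟨k, hk⟩ := exists_nat_one_div_lt
        (lt_min (by linarith [h.1]) (by linarith [h.2]) : (0:ℝ) < min (x i - a i) (b i - x i))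
      exact ⟨k, by rwa [one_div] at hk⟩
    choose K hK using hch
    refine ⟨Finset.univ.sup K, mem_box.2 fun i => ?_⟩
    have hle : (((Finset.univ.sup K : ℕ) : ℝ) + 1)⁻¹ ≤ ((K i : ℝ)+1)⁻¹ :=
      inv_succ_le_inv_succ (Finset.le_sup (Finset.mem_univ i))
    have h := lt_min_iff.1 (hK i)
    exact ⟨by linarith [h.1], by linarith [h.2]⟩

lemma iInter_expand (a b : Fin n → ℝ) : (⋂ k, expand a b k) = cbox a b := by
  ext x
  simp only [Set.mem_iInter]
  constructor
  · intro h
    rw [mem_cbox]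
    intro i
    constructor
    · by_contra hlt
      push_neg at hlt
      obtain ⟨k, hk⟩ := exists_nat_one_div_lt (show (0:ℝ) < a i - x i by linarith)
      rw [one_div] at hk
      have := (mem_box.1 (h k) i).1
      linarith
    · by_contra hlt
      push_neg at hlt
      obtain ⟨k, hk⟩ := exists_nat_one_div_lt (show (0:ℝ) < x i - b i by linarith)
      rw [one_div] at hk
      have := (mem_box.1 (h k) i).2
      linarith
  · intro hx k
    refine mem_box.2 fun i => ?_
    have h := mem_cbox.1 hx i
    have hpos : (0:ℝ) < ((k:ℝ)+1)⁻¹ := by positivity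
    exact ⟨by linarith [h.1], by linarith [h.2]⟩

lemma key_liminf (hφ : IsAdmissibleMollifier φ) (σ : Measure (Fin n → ℝ)) [SigmaFinite σ]
    (a b : Fin n → ℝ) (c : ℝ≥0∞) {g : ℝ → ℝ≥0∞}
    (hg : ∀ ε : ℝ, 0 < ε → mollify φ ε σ (box a b) / c ≤ g ε) :
    σ (obox a b) / c ≤ Filter.liminf g (nhdsWithin 0 (Set.Ioi 0)) := by
  have key : ∀ k : ℕ, σ (shrink a b k) / c ≤ Filter.liminf g (nhdsWithin 0 (Set.Ioi 0)) := by
    intro k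
    apply Filter.le_liminf_of_le (by isBoundedDefault)
    filter_upwards [Ioc_mem_nhdsGT_of_mem
      (Set.mem_Ico.2 ⟨le_rfl, by positivity⟩ : (0:ℝ) ∈ Set.Ico 0 (((k:ℝ)+1)⁻¹))] with ε hε
    refine le_trans ?_ (hg ε hε.1)
    refine ENNReal.div_le_div ?_ le_rfl
    calc σ (shrink a b k)
        ≤ σ (box (fun i => a i + ε) (fun i => b i - ε)) :=
          measure_mono (box_mono (fun i => by linarith [hε.2]) (fun i => by linarith [hε.2]))
      _ ≤ mollify φ ε σ (box a b) := le_mollify_box hφ σ hε.1 a b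
  rw [← iUnion_shrink a b, (shrink_mono a b).measure_iUnion, ENNReal.iSup_div]
  exact iSup_le key

lemma key_limsup (hφ : IsAdmissibleMollifier φ) (σ : Measure (Fin n → ℝ))
    [IsLocallyFiniteMeasure σ] (a b : Fin n → ℝ) :
    Filter.limsup (fun ε : ℝ => mollify φ ε σ (box a b)) (nhdsWithin 0 (Set.Ioi 0))
      ≤ σ (cbox a b) := by
  have key : ∀ k : ℕ,
      Filter.limsup (fun ε : ℝ => mollify φ ε σ (box a b)) (nhdsWithin 0 (Set.Ioi 0))
        ≤ σ (expand a b k) := by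
    intro k
    apply Filter.limsup_le_of_le (by isBoundedDefault)
    filter_upwards [Ioc_mem_nhdsGT_of_mem
      (Set.mem_Ico.2 ⟨le_rfl, by positivity⟩ : (0:ℝ) ∈ Set.Ico 0 (((k:ℝ)+1)⁻¹))] with ε hε
    calc mollify φ ε σ (box a b)
        ≤ σ (box (fun i => a i - ε) (fun i => b i + ε)) := mollify_le_box hφ σ hε.1 a b
      _ ≤ σ (expand a b k) :=
          measure_mono (box_mono (fun i => by linarith [hε.2]) (fun i => by linarith [hε.2]))
  have hiInter : σ (cbox a b) = ⨅ k, σ (expand a b k) := by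
    rw [← iInter_expand a b]
    refine (expand_anti a b).measure_iInter
      (fun k => (measurableSet_box _ _).nullMeasurableSet) ⟨0, ?_⟩
    have hδ : (((0:ℕ):ℝ)+1)⁻¹ = 1 := by norm_num
    have hsub : expand a b 0 ⊆ cbox (fun i => a i - 1) (fun i => b i + 1) := by
      intro x hx
      rw [mem_cbox]
      intro i
      have h := mem_box.1 hx i
      rw [hδ] at h
      exact ⟨h.1, h.2.le⟩
    exact ((measure_mono hsub).trans_lt (isCompact_cbox _ _).measure_lt_top).ne
  rw [hiInter]
  exact le_iInf key

end MollAux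


open MollAux

/-- **Convergence of mollified measures of cubes.**
(i) For every cube `Q` and `0 < ε < ℓ(Q)/2`:
`σ((1 − 2ε/ℓ(Q))Q) ≤ σ_ε(Q) ≤ σ((1 + 2ε/ℓ(Q))Q)`; in particular, if `σ(∂Q) = 0` then
`σ_ε(Q) → σ(Q)` as `ε → 0⁺`.
(ii) If `ω` is another locally finite measure, `μ = σ + ω` and `Q ∈ 𝒫^null(μ)`, then for
every `x`: `M^null(1_Q σ)(x) ≤ liminf_{ε→0⁺} M(1_Q σ_ε)(x)`. -/
theorem mollified_measure_convergence
    {n : ℕ} (φ : (Fin n → ℝ) → ℝ) (hφ : IsAdmissibleMollifier φ)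
    (σ ω : Measure (Fin n → ℝ))
    (hσ : IsLocallyFiniteMeasure σ) (hω : IsLocallyFiniteMeasure ω) :
    (∀ Q : Cube n, ∀ ε : ℝ, 0 < ε → ε < Q.side / 2 →
      σ (Q.dilate (1 - 2 * ε / Q.side)) ≤ mollify φ ε σ Q.toSet ∧
      mollify φ ε σ Q.toSet ≤ σ (Q.dilate (1 + 2 * ε / Q.side))) ∧
    (∀ Q : Cube n, σ (frontier Q.toSet) = 0 →
      Filter.Tendsto (fun ε : ℝ => mollify φ ε σ Q.toSet)
        (nhdsWithin 0 (Set.Ioi 0)) (nhds (σ Q.toSet))) ∧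
    (∀ Q : Cube n,
      (∃ β : ℤ → Fin n → Bool, nullBoundaryGrid (σ + ω) β ∧ memGrid β Q) →
      ∀ x : Fin n → ℝ,
        maximalNull (σ + ω) (σ.restrict Q.toSet) x ≤
          Filter.liminf (fun ε : ℝ => maximal ((mollify φ ε σ).restrict Q.toSet) x)
            (nhdsWithin 0 (Set.Ioi 0))) := by
  haveI := hσ
  haveI := hω
  refine ⟨?_, ?_, ?_⟩
  · -- Part (i)
    intro Q ε hε _
    rw [cube_toSet_eq, dilate_shrink, dilate_expand]
    exact ⟨le_mollify_box hφ σ hε _ _, mollify_le_box hφ σ hε _ _⟩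
  · -- Part (ii)
    intro Q hfr
    have hbox : Q.toSet = box Q.corner fun i => Q.corner i + Q.side := cube_toSet_eq Q
    apply tendsto_of_le_liminf_of_limsup_le
    · -- σ Q.toSet ≤ liminf
      have h1 : σ Q.toSet ≤ σ (obox Q.corner fun i => Q.corner i + Q.side) := by
        have hsub : Q.toSet ⊆ (obox Q.corner fun i => Q.corner i + Q.side) ∪ frontier Q.toSet := by
          intro x hx
          by_cases hxo : x ∈ obox Q.corner fun i => Q.corner i + Q.side
          · exact Or.inl hxo
          · exact Or.inr ⟨subset_closure hx, by rwa [interior_toSet]⟩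
        calc σ Q.toSet ≤ σ ((obox Q.corner fun i => Q.corner i + Q.side) ∪ frontier Q.toSet) :=
              measure_mono hsub
          _ ≤ σ (obox Q.corner fun i => Q.corner i + Q.side) + σ (frontier Q.toSet) :=
              measure_union_le _ _
          _ = σ (obox Q.corner fun i => Q.corner i + Q.side) := by rw [hfr, add_zero]
      refine h1.trans ?_
      have h2 := key_liminf hφ σ Q.corner (fun i => Q.corner i + Q.side) 1
        (g := fun ε : ℝ => mollify φ ε σ Q.toSet)
        (fun ε _ => by rw [hbox]; simp)
      simpa using h2
    · -- limsup ≤ σ Q.toSet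
      calc Filter.limsup (fun ε : ℝ => mollify φ ε σ Q.toSet) (nhdsWithin 0 (Set.Ioi 0))
          = Filter.limsup (fun ε : ℝ => mollify φ ε σ
              (box Q.corner fun i => Q.corner i + Q.side)) (nhdsWithin 0 (Set.Ioi 0)) := by
            rw [hbox]
        _ ≤ σ (cbox Q.corner fun i => Q.corner i + Q.side) := key_limsup hφ σ _ _
        _ ≤ σ Q.toSet := by
            have hsub : (cbox Q.corner fun i => Q.corner i + Q.side)
                ⊆ Q.toSet ∪ frontier Q.toSet := by
              intro x hx
              rw [← closure_toSet] at hx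
              by_cases hxi : x ∈ interior Q.toSet
              · exact Or.inl (interior_subset hxi)
              · exact Or.inr ⟨hx, hxi⟩
            calc σ (cbox Q.corner fun i => Q.corner i + Q.side)
                ≤ σ (Q.toSet ∪ frontier Q.toSet) := measure_mono hsub
              _ ≤ σ Q.toSet + σ (frontier Q.toSet) := measure_union_le _ _
              _ = σ Q.toSet := by rw [hfr, add_zero]
    · isBoundedDefault
    · isBoundedDefault
  · -- Part (iii)
    rintro Q ⟨β, hβnull, hβmem⟩ x
    unfold maximalNull
    refine iSup_le fun R => iSup_le fun hR => iSup_le fun hx => ?_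
    obtain ⟨β', hβ'null, hβ'mem⟩ := hR
    set a : Fin n → ℝ := fun i => max (R.corner i) (Q.corner i) with ha
    set b : Fin n → ℝ := fun i => min (R.corner i + R.side) (Q.corner i + Q.side) with hb
    have hinter : R.toSet ∩ Q.toSet = box a b := by
      ext z
      simp only [Set.mem_inter_iff, mem_box, Cube.toSet, Set.mem_setOf_eq, ha, hb]
      constructor
      · rintro ⟨h1, h2⟩ i
        exact ⟨max_le (h1 i).1 (h2 i).1, lt_min (h1 i).2 (h2 i).2⟩
      · intro h
        exact ⟨fun i => ⟨le_of_max_le_left (h i).1, lt_of_lt_of_le (h i).2 (min_le_left _ _)⟩,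
               fun i => ⟨le_of_max_le_right (h i).1, lt_of_lt_of_le (h i).2 (min_le_right _ _)⟩⟩
    have hrestrict : σ.restrict Q.toSet R.toSet = σ (box a b) := by
      rw [Measure.restrict_apply (measurableSet_toSet R), hinter]
    rw [hrestrict]
    have hfrR : σ (frontier R.toSet) = 0 := by
      have h := hβ'null R hβ'mem
      rw [Measure.add_apply] at h
      exact le_zero_iff.1 (h ▸ le_self_add)
    have hfrQ : σ (frontier Q.toSet) = 0 := by
      have h := hβnull Q hβmem
      rw [Measure.add_apply] at h
      exact le_zero_iff.1 (h ▸ le_self_add)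
    have hdiff : σ (box a b) ≤ σ (obox a b) := by
      have hsub : box a b ⊆ obox a b ∪ (frontier R.toSet ∪ frontier Q.toSet) := by
        intro z hz
        by_cases hzo : z ∈ obox a b
        · exact Or.inl hzo
        · right
          have hzo' := hzo
          rw [mem_obox, not_forall] at hzo'
          obtain ⟨i, hi⟩ := hzo'
          have hzRQ : z ∈ R.toSet ∩ Q.toSet := by rw [hinter]; exact hz
          have hzi := mem_box.1 hz i
          have hza : z i = a i := le_antisymm (not_lt.1 fun h => hi ⟨h, hzi.2⟩) hzi.1
          rcases le_total (R.corner i) (Q.corner i) with hc | hc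
          · -- a i = Q.corner i
            have haq : a i = Q.corner i := max_eq_right hc
            refine Or.inr ⟨subset_closure hzRQ.2, fun hall => ?_⟩
            rw [interior_toSet] at hall
            have hlt := (mem_obox.1 hall i).1
            rw [hza, haq] at hlt
            exact lt_irrefl _ hlt
          · -- a i = R.corner i
            have haq : a i = R.corner i := max_eq_left hc
            refine Or.inl ⟨subset_closure hzRQ.1, fun hall => ?_⟩
            rw [interior_toSet] at hall
            have hlt := (mem_obox.1 hall i).1
            rw [hza, haq] at hlt
            exact lt_irrefl _ hlt
      calc σ (box a b) ≤ σ (obox a b ∪ (frontier R.toSet ∪ frontier Q.toSet)) :=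
            measure_mono hsub
        _ ≤ σ (obox a b) + σ (frontier R.toSet ∪ frontier Q.toSet) := measure_union_le _ _
        _ ≤ σ (obox a b) + (σ (frontier R.toSet) + σ (frontier Q.toSet)) := by
            gcongr
            exact measure_union_le _ _
        _ = σ (obox a b) := by rw [hfrR, hfrQ, add_zero, add_zero]
    refine le_trans (ENNReal.div_le_div hdiff le_rfl) ?_
    apply key_liminf hφ σ a b (volume R.toSet)
    intro ε hε
    have happ : (mollify φ ε σ).restrict Q.toSet R.toSet = mollify φ ε σ (box a b) := by
      rw [Measure.restrict_apply (measurableSet_toSet R), hinter]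
    have hP : R.memP := by
      obtain ⟨ℓ, k, hℓ, _⟩ := hβ'mem
      exact ⟨ℓ, hℓ⟩
    calc mollify φ ε σ (box a b) / volume R.toSet
        = (mollify φ ε σ).restrict Q.toSet R.toSet / volume R.toSet := by rw [happ]
      _ ≤ maximal ((mollify φ ε σ).restrict Q.toSet) x := by
          unfold maximal
          exact le_iSup_of_le R (le_iSup_of_le hP (le_iSup_of_le hx le_rfl))
end
end
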